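/- arXiv:2402.04909 — 8 statements merged into one kernel-verified Lean document; each statement's English description precedes it below -/
import Mathlib

section
/- Let F be a closed subset of Euclidean space ℝⁿ and let x, y ∈ F. Suppose there exists a path in F from x to y of finite length. Then there exists a shortest path in F from x to y, i.e., a path γ* in F from x to y such that len(γ*) ≤ len(γ) for every path γ in F from x to y. -/
open Set
open scoped ENNReal NNReal

noncomputable section

/-- `γ`, restricted to `[0,1]`, is a path in `F` from `x` to `y`. -/
def IsPathIn {E : Type*} [TopologicalSpace E] (F : Set E) (γ : ℝ → E) (x y : E) : Prop :=
  ContinuousOn γ (Icc 0 1) ∧ (∀ s ∈ Icc (0:ℝ) 1, γ s ∈ F) ∧ γ 0 = x ∧ γ 1 = y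

/-- `γ` is a shortest path in `F` from `x` to `y`, where the length of a path is its
total variation on `[0,1]`. -/
def IsShortestPathIn {E : Type*} [PseudoEMetricSpace E] (F : Set E) (γ : ℝ → E) (x y : E) :
    Prop :=
  IsPathIn F γ x y ∧
    ∀ γ' : ℝ → E, IsPathIn F γ' x y → eVariationOn γ (Icc 0 1) ≤ eVariationOn γ' (Icc 0 1)

/-- `γ₀` and `γ₁` (as paths parametrized on `[0,1]`) are homotopic relative to their
endpoints through maps with values in `S`. -/
def PathHomotopicIn {E : Type*} [TopologicalSpace E] (S : Set E) (γ₀ γ₁ : ℝ → E) : Prop :=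
  ∃ H : ℝ × ℝ → E,
    ContinuousOn H ((Icc (0:ℝ) 1) ×ˢ (Icc (0:ℝ) 1)) ∧
    (∀ p ∈ (Icc (0:ℝ) 1) ×ˢ (Icc (0:ℝ) 1), H p ∈ S) ∧
    (∀ s ∈ Icc (0:ℝ) 1, H (s, 0) = γ₀ s) ∧
    (∀ s ∈ Icc (0:ℝ) 1, H (s, 1) = γ₁ s) ∧
    (∀ t ∈ Icc (0:ℝ) 1, H (0, t) = γ₀ 0) ∧
    (∀ t ∈ Icc (0:ℝ) 1, H (1, t) = γ₀ 1)

/-- The restriction of `γ` to `[s₁, s₂]`, reparametrized to `[0,1]`. -/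
def subPath {E : Type*} (γ : ℝ → E) (s₁ s₂ : ℝ) : ℝ → E := fun s => γ (s₁ + s * (s₂ - s₁))

/-- The straight-line path from `p` to `q`. -/
def linePath {E : Type*} [AddCommGroup E] [Module ℝ E] (p q : E) : ℝ → E :=
  fun t => (1 - t) • p + t • q

section Helpers

variable {E : Type*} [PseudoEMetricSpace E]

/-- The variation of a continuous function vanishes on small right-neighborhoods. -/
lemma evar_small_right (γ : ℝ → E) {c b : ℝ} (hcb : c < b)
    (hcont : ContinuousWithinAt γ (Icc c b) c)
    (hfin : eVariationOn γ (Icc c b) ≠ ⊤) {ε : ℝ≥0∞} (hε : 0 < ε) :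
    ∃ d ∈ Ioc c b, eVariationOn γ (Icc c d) < ε := by
  set ε₁ : ℝ≥0∞ := min (ε / 2) 1 with hε₁def
  have hε₁pos : 0 < ε₁ := lt_min (ENNReal.half_pos hε.ne') one_pos
  have hε₁top : ε₁ ≠ ⊤ := ((min_le_right _ _).trans_lt (by norm_num)).ne
  have hε₁lt : ε₁ < ε := by
    by_cases hεtop : ε = ⊤
    · exact (min_le_right _ _).trans_lt (by rw [hεtop]; exact ENNReal.one_lt_top)
    · exact (min_le_left _ _).trans_lt (ENNReal.half_lt_self hε.ne' hεtop)
  set η : ℝ≥0∞ := ε₁ / 8 with hηdef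
  have hηpos : 0 < η := ENNReal.div_pos hε₁pos.ne' (by norm_num)
  have h2η : 2 * η ≤ ε₁ := by
    calc 2 * η ≤ 8 * η := by gcongr <;> norm_num
    _ = 8 * (ε₁ / 8) := rfl
    _ ≤ ε₁ := ENNReal.mul_div_le
  have hηle : η ≤ ε₁ := le_trans (le_mul_of_one_le_left zero_le one_le_two) h2η
  -- choose d₀ by continuity
  obtain ⟨d₀, hd₀, hd₀small⟩ : ∃ d₀ ∈ Ioc c b, ∀ t ∈ Icc c d₀, edist (γ t) (γ c) < η := by
    have : {t | edist (γ t) (γ c) < η} ∈ nhdsWithin c (Icc c b) :=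
      hcont (EMetric.ball_mem_nhds _ hηpos)
    rw [mem_nhdsWithin] at this
    obtain ⟨U, hUopen, hcU, hU⟩ := this
    obtain ⟨δ, hδpos, hδ⟩ := Metric.isOpen_iff.1 hUopen c hcU
    refine ⟨min b (c + δ / 2), ⟨lt_min hcb (by linarith), min_le_left _ _⟩, fun t ht => ?_⟩
    have h1 : t ∈ U := by
      apply hδ
      rw [Metric.mem_ball, Real.dist_eq, abs_lt]
      have h2 := ht.1
      have h3 : t ≤ c + δ / 2 := le_trans ht.2 (min_le_right _ _)
      constructor <;> linarith
    exact hU ⟨h1, ht.1, le_trans ht.2 (min_le_left _ _)⟩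
  set W : ℝ≥0∞ := eVariationOn γ (Icc c d₀) with hWdef
  have hWfin : W ≠ ⊤ :=
    ne_top_of_le_ne_top hfin (eVariationOn.mono γ (Icc_subset_Icc le_rfl hd₀.2))
  by_cases hWsmall : W < ε₁
  · exact ⟨d₀, hd₀, hWsmall.trans hε₁lt⟩
  push_neg at hWsmall
  have hWpos : W ≠ 0 := fun h => hε₁pos.ne' (le_antisymm (h ▸ hWsmall) zero_le)
  have hsub : W - η < W := ENNReal.sub_lt_self hWfin hWpos hηpos.ne'
  rw [hWdef, eVariationOn] at hsub
  obtain ⟨⟨n, u, hu, us⟩, hlt⟩ := lt_iSup_iff.1 hsub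
  have hsum : W ≤ (∑ i ∈ Finset.range n, edist (γ (u (i + 1))) (γ (u i))) + η :=
    tsub_le_iff_right.1 hlt.le
  by_cases hex : ∃ i, c < u i
  swap
  · -- all points equal c, so W is tiny and d₀ works
    push_neg at hex
    have hall : ∀ i, u i = c := fun i => le_antisymm (hex i) (us i).1
    have h0 : (∑ i ∈ Finset.range n, edist (γ (u (i + 1))) (γ (u i))) = 0 :=
      Finset.sum_eq_zero fun i _ => by rw [hall (i+1), hall i, edist_self]
    rw [h0, zero_add] at hsum
    exact ⟨d₀, hd₀, ((hsum.trans hηle).trans_lt hε₁lt)⟩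
  classical
  obtain ⟨k, hk, hklt⟩ : ∃ k, c < u k ∧ ∀ i < k, u i = c :=
    ⟨Nat.find hex, Nat.find_spec hex, fun i hi =>
      le_antisymm (not_lt.1 (Nat.find_min hex hi)) (us i).1⟩
  -- head bound
  have hhead : (∑ i ∈ Finset.range k, edist (γ (u (i + 1))) (γ (u i))) ≤ η := by
    cases k with
    | zero => simp
    | succ j =>
      rw [Finset.sum_range_succ]
      have h1 : (∑ i ∈ Finset.range j, edist (γ (u (i + 1))) (γ (u i))) = 0 := by
        apply Finset.sum_eq_zero
        intro i hi
        rw [Finset.mem_range] at hi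
        rw [hklt (i+1) (by omega), hklt i (by omega), edist_self]
      rw [h1, zero_add, hklt j (by omega)]
      exact (hd₀small (u (j+1)) (us (j+1))).le
  -- tail bound
  have htail : (∑ i ∈ Finset.Ico k n, edist (γ (u (i + 1))) (γ (u i)))
      ≤ eVariationOn γ (Icc (u k) d₀) := by
    rw [Finset.sum_Ico_eq_sum_range]
    have hmem : ∀ i, u (k + i) ∈ Icc (u k) d₀ := fun i => ⟨hu (Nat.le_add_right _ _), (us _).2⟩
    have hmono : Monotone (fun i => u (k + i)) := fun i j hij => hu (by omega)
    calc (∑ i ∈ Finset.range (n - k), edist (γ (u (k + i + 1))) (γ (u (k + i))))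
        = ∑ i ∈ Finset.range (n - k), edist (γ (u (k + (i + 1)))) (γ (u (k + i))) := by
          apply Finset.sum_congr rfl; intro i _; ring_nf
      _ ≤ eVariationOn γ (Icc (u k) d₀) := eVariationOn.sum_le (f := γ) hmono hmem
  have hWle : W ≤ eVariationOn γ (Icc (u k) d₀) + 2 * η := by
    rcases le_or_gt k n with hkn | hkn
    · have hsplit : (∑ i ∈ Finset.range n, edist (γ (u (i + 1))) (γ (u i)))
          = (∑ i ∈ Finset.range k, edist (γ (u (i + 1))) (γ (u i)))
            + ∑ i ∈ Finset.Ico k n, edist (γ (u (i + 1))) (γ (u i)) :=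
        (Finset.sum_range_add_sum_Ico _ hkn).symm
      calc W ≤ (∑ i ∈ Finset.range n, edist (γ (u (i + 1))) (γ (u i))) + η := hsum
        _ ≤ (η + eVariationOn γ (Icc (u k) d₀)) + η := by
            rw [hsplit]; exact add_le_add (add_le_add hhead htail) le_rfl
        _ = eVariationOn γ (Icc (u k) d₀) + 2 * η := by ring
    · have hzero : (∑ i ∈ Finset.range n, edist (γ (u (i + 1))) (γ (u i)))
          ≤ (∑ i ∈ Finset.range k, edist (γ (u (i + 1))) (γ (u i))) :=
        Finset.sum_le_sum_of_subset (Finset.range_subset_range.2 hkn.le)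
      calc W ≤ (∑ i ∈ Finset.range n, edist (γ (u (i + 1))) (γ (u i))) + η := hsum
        _ ≤ η + η := add_le_add (hzero.trans hhead) le_rfl
        _ = 0 + 2 * η := by ring
        _ ≤ eVariationOn γ (Icc (u k) d₀) + 2 * η := add_le_add zero_le le_rfl
  have hadd : eVariationOn γ (Icc c (u k)) + eVariationOn γ (Icc (u k) d₀) = W := by
    have := eVariationOn.Icc_add_Icc γ (s := univ) hk.le (us k).2 (mem_univ (u k))
    simpa using this
  have hBfin : eVariationOn γ (Icc (u k) d₀) ≠ ⊤ :=
    ne_top_of_le_ne_top hWfin (by rw [← hadd]; exact le_add_self)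
  have hA : eVariationOn γ (Icc c (u k)) ≤ 2 * η := by
    have h1 : eVariationOn γ (Icc c (u k)) + eVariationOn γ (Icc (u k) d₀)
        ≤ 2 * η + eVariationOn γ (Icc (u k) d₀) := by
      rw [hadd, add_comm (2*η)]; exact hWle
    exact ENNReal.le_of_add_le_add_right hBfin h1
  exact ⟨u k, ⟨hk, (us k).2.trans hd₀.2⟩, (hA.trans h2η).trans_lt hε₁lt⟩

/-- Left version. -/
lemma evar_small_left (γ : ℝ → E) {a c : ℝ} (hac : a < c)
    (hcont : ContinuousWithinAt γ (Icc a c) c)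
    (hfin : eVariationOn γ (Icc a c) ≠ ⊤) {ε : ℝ≥0∞} (hε : 0 < ε) :
    ∃ d ∈ Ico a c, eVariationOn γ (Icc d c) < ε := by
  set ρ : ℝ → ℝ := fun t => a + c - t with hρ
  have hρanti : AntitoneOn ρ (Icc a c) := fun s _ t _ hst => by simp [hρ]; linarith
  have hρmaps : ∀ s t u, u ∈ Icc s t → ρ u ∈ Icc (ρ t) (ρ s) := fun s t u hu =>
    ⟨by simp [hρ]; linarith [hu.2], by simp [hρ]; linarith [hu.1]⟩
  have hρimg : ∀ s t : ℝ, s ≤ t → ρ '' Icc s t = Icc (ρ t) (ρ s) := by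
    intro s t hst
    apply Subset.antisymm
    · rintro _ ⟨u, hu, rfl⟩; exact hρmaps s t u hu
    · rintro v hv
      refine ⟨ρ v, ?_, by simp [hρ]⟩
      simp only [hρ, mem_Icc] at hv ⊢
      constructor <;> linarith [hv.1, hv.2]
  have key : ∀ s t : ℝ, s ≤ t → eVariationOn (γ ∘ ρ) (Icc s t) = eVariationOn γ (Icc (ρ t) (ρ s)) := by
    intro s t hst
    rw [eVariationOn.comp_eq_of_antitoneOn γ ρ
      (fun u hu v hv huv => by simp [hρ]; linarith), hρimg s t hst]
  have hρa : ρ a = c := by simp [hρ]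
  have hρc : ρ c = a := by simp [hρ]
  have hfin' : eVariationOn (γ ∘ ρ) (Icc a c) ≠ ⊤ := by
    rw [key a c hac.le, hρa, hρc]; exact hfin
  have hmapsTo : MapsTo ρ (Icc a c) (Icc a c) := fun u hu =>
    ⟨by simp [hρ]; linarith [hu.2], by simp [hρ]; linarith [hu.1]⟩
  have hcont' : ContinuousWithinAt (γ ∘ ρ) (Icc a c) a :=
    ContinuousWithinAt.comp (hρa ▸ hcont)
      (Continuous.continuousWithinAt (by fun_prop)) hmapsTo
  obtain ⟨d, hd, hvar⟩ := evar_small_right (γ ∘ ρ) hac hcont' hfin' hε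
  refine ⟨ρ d, ?_, ?_⟩
  · constructor
    · simp [hρ]; linarith [hd.2]
    · simp [hρ]; linarith [hd.1]
  · have hkey := key a d hd.1.le
    rw [hρa] at hkey
    rw [← hkey]
    exact hvar

/-- The (real-valued) variation function of a continuous finite-variation function on
`[0,1]` is continuous on `[0,1]`. -/
lemma evar_fun_continuousOn (γ : ℝ → E) (hcont : ContinuousOn γ (Icc 0 1))
    (hfin : eVariationOn γ (Icc 0 1) ≠ ⊤) :
    ContinuousOn (fun t => (eVariationOn γ (Icc 0 t)).toReal) (Icc 0 1) := by
  have hfin' : ∀ s t : ℝ, 0 ≤ s → t ≤ 1 → eVariationOn γ (Icc s t) ≠ ⊤ := fun s t hs ht =>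
    ne_top_of_le_ne_top hfin
      (eVariationOn.mono γ (fun u hu => ⟨hs.trans hu.1, hu.2.trans ht⟩))
  have hadd : ∀ s t u : ℝ, s ≤ t → t ≤ u →
      eVariationOn γ (Icc s t) + eVariationOn γ (Icc t u) = eVariationOn γ (Icc s u) := by
    intro s t u h1 h2
    have := eVariationOn.Icc_add_Icc γ (s := univ) h1 h2 (mem_univ t)
    simpa using this
  intro t ht
  rw [Metric.continuousWithinAt_iff]
  intro ε hε
  obtain ⟨dR, hdR1, hdR2⟩ : ∃ d, t < d ∧ ∀ u ∈ Icc (0:ℝ) 1, t ≤ u → u ≤ d →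
      (eVariationOn γ (Icc t u)).toReal < ε := by
    rcases eq_or_lt_of_le ht.2 with h1 | h1
    · refine ⟨t + 1, by linarith, fun u hu h2 h3 => ?_⟩
      have hut : u = t := le_antisymm (h1 ▸ hu.2) h2
      rw [hut, Icc_self]
      rw [eVariationOn.subsingleton γ (subsingleton_singleton)]
      simpa using hε
    · obtain ⟨d, hd, hvar⟩ := evar_small_right γ h1
        ((hcont t ht).mono (Icc_subset_Icc ht.1 le_rfl))
        (hfin' t 1 ht.1 le_rfl) (ENNReal.ofReal_pos.2 hε)
      refine ⟨d, hd.1, fun u hu h2 h3 => ?_⟩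
      have h5 : eVariationOn γ (Icc t u) < ENNReal.ofReal ε :=
        (eVariationOn.mono γ (Icc_subset_Icc le_rfl h3)).trans_lt hvar
      exact (ENNReal.lt_ofReal_iff_toReal_lt (hfin' t u ht.1 hu.2)).1 h5
  obtain ⟨dL, hdL1, hdL2⟩ : ∃ d, d < t ∧ ∀ u ∈ Icc (0:ℝ) 1, d ≤ u → u ≤ t →
      (eVariationOn γ (Icc u t)).toReal < ε := by
    rcases eq_or_lt_of_le ht.1 with h1 | h1
    · refine ⟨t - 1, by linarith, fun u hu h2 h3 => ?_⟩
      have hut : u = t := le_antisymm h3 (h1 ▸ hu.1)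
      rw [hut, Icc_self]
      rw [eVariationOn.subsingleton γ (subsingleton_singleton)]
      simpa using hε
    · obtain ⟨d, hd, hvar⟩ := evar_small_left γ h1
        ((hcont t ht).mono (Icc_subset_Icc le_rfl ht.2))
        (hfin' 0 t le_rfl ht.2) (ENNReal.ofReal_pos.2 hε)
      refine ⟨d, hd.2, fun u hu h2 h3 => ?_⟩
      have h5 : eVariationOn γ (Icc u t) < ENNReal.ofReal ε :=
        (eVariationOn.mono γ (Icc_subset_Icc h2 le_rfl)).trans_lt hvar
      exact (ENNReal.lt_ofReal_iff_toReal_lt (hfin' u t hu.1 ht.2)).1 h5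
  refine ⟨min (dR - t) (t - dL), lt_min (by linarith) (by linarith), fun u hu hdist => ?_⟩
  rw [Real.dist_eq] at hdist
  have habs := abs_lt.1 hdist
  rcases le_total t u with h | h
  · have h3 : u ≤ dR := by
      have := habs.2
      have := min_le_left (dR - t) (t - dL)
      linarith
    have e1 : (eVariationOn γ (Icc 0 u)).toReal
        = (eVariationOn γ (Icc 0 t)).toReal + (eVariationOn γ (Icc t u)).toReal := by
      rw [← ENNReal.toReal_add (hfin' 0 t le_rfl ht.2) (hfin' t u ht.1 hu.2), hadd 0 t u ht.1 h]
    rw [Real.dist_eq, e1]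
    have hnn : 0 ≤ (eVariationOn γ (Icc t u)).toReal := ENNReal.toReal_nonneg
    rw [show (eVariationOn γ (Icc 0 t)).toReal + (eVariationOn γ (Icc t u)).toReal
        - (eVariationOn γ (Icc 0 t)).toReal = (eVariationOn γ (Icc t u)).toReal by ring,
      abs_of_nonneg hnn]
    exact hdR2 u hu h h3
  · have h3 : dL ≤ u := by
      have := habs.1
      have := min_le_right (dR - t) (t - dL)
      linarith
    have e1 : (eVariationOn γ (Icc 0 t)).toReal
        = (eVariationOn γ (Icc 0 u)).toReal + (eVariationOn γ (Icc u t)).toReal := by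
      rw [← ENNReal.toReal_add (hfin' 0 u le_rfl hu.2) (hfin' u t hu.1 ht.2), hadd 0 u t hu.1 h]
    rw [Real.dist_eq, e1]
    have hnn : 0 ≤ (eVariationOn γ (Icc u t)).toReal := ENNReal.toReal_nonneg
    rw [show (eVariationOn γ (Icc 0 u)).toReal - ((eVariationOn γ (Icc 0 u)).toReal
        + (eVariationOn γ (Icc u t)).toReal) = -(eVariationOn γ (Icc u t)).toReal by ring,
      abs_neg, abs_of_nonneg hnn]
    exact hdL2 u hu h3 h

lemma reparam {E : Type*} [EMetricSpace E] {F : Set E} {γ : ℝ → E} {x y : E}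
    (hγ : IsPathIn F γ x y) (hfin : eVariationOn γ (Icc 0 1) ≠ ⊤)
    {C : ℝ≥0} (hC : eVariationOn γ (Icc 0 1) ≤ C) :
    ∃ γ' : ℝ → E, IsPathIn F γ' x y ∧
      eVariationOn γ' (Icc 0 1) ≤ eVariationOn γ (Icc 0 1) ∧
      LipschitzOnWith C γ' (Icc 0 1) ∧
      ∀ t, γ' t = γ' (max 0 (min 1 t)) := by
  obtain ⟨hγcont, hγmem, hγ0, hγ1⟩ := hγ
  have h0s : (0:ℝ) ∈ Icc (0:ℝ) 1 := ⟨le_rfl, zero_le_one⟩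
  have h1s : (1:ℝ) ∈ Icc (0:ℝ) 1 := ⟨zero_le_one, le_rfl⟩
  have hxF : x ∈ F := hγ0 ▸ hγmem 0 h0s
  by_cases hV0 : eVariationOn γ (Icc 0 1) = 0
  · have hxy : x = y := by
      have h1 : edist (γ 0) (γ 1) ≤ eVariationOn γ (Icc 0 1) := eVariationOn.edist_le γ h0s h1s
      rw [hV0, le_zero_iff, edist_eq_zero] at h1
      rw [← hγ0, ← hγ1, h1]
    refine ⟨fun _ => x, ⟨continuousOn_const, fun s _ => hxF, rfl, hxy⟩, ?_, ?_, fun t => rfl⟩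
    · have : eVariationOn (fun _ : ℝ => x) (Icc 0 1) = 0 := by
        apply eVariationOn.constant_on
        rintro a ⟨_, _, rfl⟩ b ⟨_, _, rfl⟩; rfl
      rw [this]; exact zero_le
    · intro p _ q _; simp
  -- main case
  set s : Set ℝ := Icc 0 1 with hsdef
  set V := eVariationOn γ s with hVdef
  set Vr := V.toReal with hVrdef
  have hVrpos : 0 < Vr := ENNReal.toReal_pos hV0 hfin
  have hlbv : LocallyBoundedVariationOn γ s :=
    BoundedVariationOn.locallyBoundedVariationOn hfin
  set φ := variationOnFromTo γ s 0 with hφdef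
  have hφeq : ∀ t ∈ s, φ t = (eVariationOn γ (Icc 0 t)).toReal := by
    intro t ht
    rw [hφdef, variationOnFromTo.eq_of_le γ s ht.1]
    congr 1
    rw [hsdef, Icc_inter_Icc, min_eq_right ht.2, max_self]
  have hφcont : ContinuousOn φ s :=
    (evar_fun_continuousOn γ hγcont hfin).congr fun t ht => hφeq t ht
  have hφ0 : φ 0 = 0 := variationOnFromTo.self γ s 0
  have hφ1 : φ 1 = Vr := by rw [hφeq 1 h1s]
  have hφmono : MonotoneOn φ s := variationOnFromTo.monotoneOn hlbv h0s
  have himg : φ '' s = Icc 0 Vr := by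
    apply Subset.antisymm
    · rintro _ ⟨t, ht, rfl⟩
      exact ⟨hφ0 ▸ hφmono h0s ht ht.1, hφ1 ▸ hφmono ht h1s ht.2⟩
    · have h2 := intermediate_value_Icc (zero_le_one (α := ℝ)) hφcont
      rw [hφ0, hφ1] at h2
      exact h2
  set g := naturalParameterization γ s 0 with hgdef
  have hUS : HasUnitSpeedOn g (Icc 0 Vr) :=
    himg ▸ has_unit_speed_naturalParameterization γ hlbv h0s
  have hgvar : ∀ a b : ℝ, a ∈ Icc 0 Vr → b ∈ Icc 0 Vr → a ≤ b →
      eVariationOn g (Icc a b) = ENNReal.ofReal (b - a) := by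
    intro a b ha hb hab
    have h2 := hUS ha hb
    rw [Icc_inter_Icc, max_eq_right ha.1, min_eq_right hb.2] at h2
    rw [h2]
    norm_num
  have hglip : LipschitzOnWith 1 g (Icc 0 Vr) := by
    intro p hp q hq
    rcases le_total p q with h | h
    · calc edist (g p) (g q) ≤ eVariationOn g (Icc p q) :=
          eVariationOn.edist_le g ⟨le_rfl, h⟩ ⟨h, le_rfl⟩
        _ = ENNReal.ofReal (q - p) := hgvar p q hp hq h
        _ ≤ ↑(1:ℝ≥0) * edist p q := by
            rw [ENNReal.coe_one, one_mul, edist_dist, Real.dist_eq]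
            exact ENNReal.ofReal_le_ofReal (le_abs_self _ |>.trans (le_of_eq (abs_sub_comm _ _)))
    · calc edist (g p) (g q) ≤ eVariationOn g (Icc q p) :=
          (edist_comm (g p) (g q)) ▸ eVariationOn.edist_le g ⟨le_rfl, h⟩ ⟨h, le_rfl⟩
        _ = ENNReal.ofReal (p - q) := hgvar q p hq hp h
        _ ≤ ↑(1:ℝ≥0) * edist p q := by
            rw [ENNReal.coe_one, one_mul, edist_dist, Real.dist_eq]
            exact ENNReal.ofReal_le_ofReal (le_abs_self _)
  have hgmem : ∀ t ∈ Icc 0 Vr, g t ∈ γ '' s := by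
    intro t htv
    have h2 : t ∈ φ '' s := himg.symm ▸ htv
    exact ⟨_, Function.invFunOn_mem h2, rfl⟩
  have hgγ : ∀ t ∈ s, g (φ t) = γ t := fun t ht =>
    edist_eq_zero.1 (edist_naturalParameterization_eq_zero hlbv h0s ht)
  have hcl : ∀ t ∈ s, max 0 (min 1 t) = t := fun t ht => by
    rw [min_eq_right ht.2, max_eq_right ht.1]
  have hclmem : ∀ t : ℝ, max 0 (min 1 t) ∈ s := fun t =>
    ⟨le_max_left _ _, max_le zero_le_one (min_le_left _ _)⟩
  have hmapsV : ∀ t : ℝ, Vr * max 0 (min 1 t) ∈ Icc 0 Vr := fun t =>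
    ⟨mul_nonneg hVrpos.le (hclmem t).1,
     mul_le_of_le_one_right hVrpos.le (hclmem t).2⟩
  have hVrC : Vr ≤ (C : ℝ) := by
    have h2 := ENNReal.toReal_mono ENNReal.coe_ne_top hC
    simpa using h2
  have hlip : LipschitzOnWith C (fun t => g (Vr * max 0 (min 1 t))) s := by
    intro p hp q hq
    calc edist (g (Vr * max 0 (min 1 p))) (g (Vr * max 0 (min 1 q)))
        ≤ ↑(1:ℝ≥0) * edist (Vr * max 0 (min 1 p)) (Vr * max 0 (min 1 q)) :=
          hglip (hmapsV p) (hmapsV q)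
      _ = edist (Vr * p) (Vr * q) := by rw [hcl p hp, hcl q hq, ENNReal.coe_one, one_mul]
      _ = ENNReal.ofReal (Vr * dist p q) := by
          rw [edist_dist, Real.dist_eq, Real.dist_eq, ← mul_sub, abs_mul, abs_of_nonneg hVrpos.le]
      _ ≤ ENNReal.ofReal ((C : ℝ) * dist p q) :=
          ENNReal.ofReal_le_ofReal (mul_le_mul_of_nonneg_right hVrC dist_nonneg)
      _ = ↑C * edist p q := by
          rw [ENNReal.ofReal_mul C.coe_nonneg, edist_dist, ENNReal.ofReal_coe_nnreal]
  have hend0 : g (Vr * max 0 (min 1 0)) = x := by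
    have h2 : Vr * max 0 (min 1 (0:ℝ)) = φ 0 := by rw [hφ0, hcl 0 h0s, mul_zero]
    rw [h2, hgγ 0 h0s, hγ0]
  have hend1 : g (Vr * max 0 (min 1 1)) = y := by
    have h2 : Vr * max 0 (min 1 (1:ℝ)) = φ 1 := by rw [hφ1, hcl 1 h1s, mul_one]
    rw [h2, hgγ 1 h1s, hγ1]
  refine ⟨fun t => g (Vr * max 0 (min 1 t)), ⟨hlip.continuousOn, ?_, hend0, hend1⟩, ?_, hlip, ?_⟩
  · intro t ht
    obtain ⟨u, hu, hgu⟩ := hgmem _ (hmapsV t)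
    dsimp only
    rw [← hgu]
    exact hγmem u hu
  · have hmono : MonotoneOn (fun t : ℝ => Vr * max 0 (min 1 t)) s := by
      intro p hp q hq hpq
      dsimp only
      rw [hcl p hp, hcl q hq]
      exact mul_le_mul_of_nonneg_left hpq hVrpos.le
    have hcomp := eVariationOn.comp_eq_of_monotoneOn g (fun t : ℝ => Vr * max 0 (min 1 t)) hmono
    have himg2 : (fun t : ℝ => Vr * max 0 (min 1 t)) '' s = Icc 0 Vr := by
      apply Subset.antisymm
      · rintro _ ⟨t, ht, rfl⟩; exact hmapsV t
      · rintro v hv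
        refine ⟨v / Vr, ⟨div_nonneg hv.1 hVrpos.le, div_le_one_of_le₀ hv.2 hVrpos.le⟩, ?_⟩
        dsimp only
        rw [hcl (v / Vr) ⟨div_nonneg hv.1 hVrpos.le, div_le_one_of_le₀ hv.2 hVrpos.le⟩,
          mul_div_cancel₀ v hVrpos.ne']
    calc eVariationOn (fun t => g (Vr * max 0 (min 1 t))) s
        = eVariationOn g (Icc 0 Vr) := by rw [← himg2, ← hcomp]; rfl
      _ = ENNReal.ofReal (Vr - 0) := hgvar 0 Vr ⟨le_rfl, hVrpos.le⟩ ⟨hVrpos.le, le_rfl⟩ hVrpos.le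
      _ ≤ V := by rw [sub_zero, hVrdef, ENNReal.ofReal_toReal hfin]
  · intro t
    dsimp only
    rw [hcl (max 0 (min 1 t)) (hclmem t)]

/-- A lower semicontinuous `ℝ≥0∞`-valued function attains its minimum on a nonempty
compact set. -/
lemma lsc_min_on_compact {X : Type*} [TopologicalSpace X] [T2Space X]
    {A : Set X} (hA : IsCompact A) (hne : A.Nonempty) {φ : X → ℝ≥0∞}
    (hφ : LowerSemicontinuous φ) : ∃ f ∈ A, ∀ g ∈ A, φ f ≤ φ g := by
  set m := ⨅ g ∈ A, φ g with hm
  have hlb : ∀ g ∈ A, m ≤ φ g := fun g hg => biInf_le φ hg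
  have hlem : ∀ v : ℝ≥0∞, m < v → ∃ g ∈ A, φ g < v := by
    intro v hv
    rw [hm, iInf_lt_iff] at hv
    obtain ⟨g, hg⟩ := hv
    rw [iInf_lt_iff] at hg
    obtain ⟨hgA, hgv⟩ := hg
    exact ⟨g, hgA, hgv⟩
  suffices hsuff : ∃ f ∈ A, φ f ≤ m by
    obtain ⟨f, hfA, hfm⟩ := hsuff
    exact ⟨f, hfA, fun g hg => hfm.trans (hlb g hg)⟩
  by_cases hmtop : m = ⊤
  · obtain ⟨f, hf⟩ := hne
    exact ⟨f, hf, by rw [hmtop]; exact le_top⟩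
  have hAcl : IsClosed A := hA.isClosed
  have hιne : Nonempty {v : ℝ≥0∞ // m < v} :=
    ⟨⟨m + 1, ENNReal.lt_add_right hmtop one_ne_zero⟩⟩
  set Z : {v : ℝ≥0∞ // m < v} → Set X := fun v => A ∩ {g | φ g ≤ v.1} with hZ
  have hZclosed : ∀ v, IsClosed (Z v) := fun v =>
    hAcl.inter (hφ.isClosed_preimage v.1)
  have hZcompact : ∀ v, IsCompact (Z v) := fun v =>
    hA.of_isClosed_subset (hZclosed v) inter_subset_left
  have hZne : ∀ v, (Z v).Nonempty := by
    rintro ⟨v, hv⟩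
    obtain ⟨g, hgA, hgv⟩ := hlem v hv
    exact ⟨g, hgA, hgv.le⟩
  have hZdir : Directed (· ⊇ ·) Z := by
    rintro ⟨v, hv⟩ ⟨w, hw⟩
    refine ⟨⟨min v w, lt_min hv hw⟩, ?_, ?_⟩
    · rintro g ⟨hgA, hgm⟩
      refine ⟨hgA, ?_⟩
      simp only [mem_setOf_eq] at hgm ⊢
      exact le_trans hgm (min_le_left _ _)
    · rintro g ⟨hgA, hgm⟩
      refine ⟨hgA, ?_⟩
      simp only [mem_setOf_eq] at hgm ⊢
      exact le_trans hgm (min_le_right _ _)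
  obtain ⟨f, hf⟩ := IsCompact.nonempty_iInter_of_directed_nonempty_isCompact_isClosed
    Z hZdir hZne hZcompact hZclosed
  simp only [mem_iInter] at hf
  have hfA : f ∈ A := (hf hιne.some).1
  refine ⟨f, hfA, ?_⟩
  by_contra hcon
  push_neg at hcon
  obtain ⟨v, hv1, hv2⟩ := exists_between hcon
  exact absurd ((hf ⟨v, hv1⟩).2) (not_le.2 hv2)

lemma evar_lsc {E : Type*} [PseudoEMetricSpace E] :
    LowerSemicontinuous (fun f : ℝ → E => eVariationOn f (Icc 0 1)) := by
  intro f v hv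
  exact eVariationOn.lowerSemicontinuous_aux (F := fun g : ℝ → E => g) (p := nhds f)
    (fun t _ => (continuous_apply t).tendsto f) hv


end Helpers

/-- In a closed subset of Euclidean space, if two points are joined by a finite-length path
in the set, then there exists a shortest path in the set between them. -/
theorem stmt_1 {n : ℕ} (F : Set (EuclideanSpace ℝ (Fin n))) (hF : IsClosed F)
    (x y : EuclideanSpace ℝ (Fin n)) (hx : x ∈ F) (hy : y ∈ F)
    (hfin : ∃ γ : ℝ → EuclideanSpace ℝ (Fin n),
      IsPathIn F γ x y ∧ eVariationOn γ (Icc 0 1) ≠ ⊤) :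
    ∃ γstar : ℝ → EuclideanSpace ℝ (Fin n), IsShortestPathIn F γstar x y := by
  classical
  obtain ⟨γ₀, hγ₀, hfin₀⟩ := hfin
  set V₀ := eVariationOn γ₀ (Icc 0 1) with hV₀
  set C : ℝ≥0 := V₀.toNNReal + 1 with hCdef
  have hV₀C : V₀ ≤ (C : ℝ≥0∞) := by
    rw [hCdef, ENNReal.coe_add, ENNReal.coe_toNNReal hfin₀, ENNReal.coe_one]
    exact le_self_add
  set K := F ∩ Metric.closedBall x C with hKdef
  have hKcompact : IsCompact K := (isCompact_closedBall x (C:ℝ)).inter_left hF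
  have hKclosed : IsClosed K := hF.inter Metric.isClosed_closedBall
  set A : Set (ℝ → EuclideanSpace ℝ (Fin n)) :=
    {f | ∀ t, f t ∈ K} ∩ {f | LipschitzOnWith C f (Icc 0 1)} ∩ {f | f 0 = x} ∩ {f | f 1 = y}
    with hAdef
  have h1closed : IsClosed {f : ℝ → EuclideanSpace ℝ (Fin n) | ∀ t, f t ∈ K} := by
    have he : {f : ℝ → EuclideanSpace ℝ (Fin n) | ∀ t, f t ∈ K}
        = Set.pi univ (fun _ : ℝ => K) := by
      ext f; simp [Set.mem_pi]
    rw [he]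
    exact isClosed_set_pi (fun a _ => hKclosed)
  have h2closed : IsClosed {f : ℝ → EuclideanSpace ℝ (Fin n) | LipschitzOnWith C f (Icc 0 1)} := by
    have he : {f : ℝ → EuclideanSpace ℝ (Fin n) | LipschitzOnWith C f (Icc 0 1)}
        = ⋂ (p : Icc (0:ℝ) 1), ⋂ (q : Icc (0:ℝ) 1),
          {f : ℝ → EuclideanSpace ℝ (Fin n) |
            edist (f p.1) (f q.1) ≤ (C : ℝ≥0∞) * edist p.1 q.1} := by
      ext f
      simp only [mem_setOf_eq, mem_iInter]
      constructor
      · intro h p q; exact h p.2 q.2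
      · intro h p hp q hq; exact h ⟨p, hp⟩ ⟨q, hq⟩
    rw [he]
    exact isClosed_iInter fun p => isClosed_iInter fun q =>
      isClosed_le ((continuous_apply p.1).edist (continuous_apply q.1)) continuous_const
  have hAclosed : IsClosed A :=
    ((h1closed.inter h2closed).inter
      (isClosed_eq (continuous_apply 0) continuous_const)).inter
      (isClosed_eq (continuous_apply 1) continuous_const)
  have hAcompact : IsCompact A :=
    IsCompact.of_isClosed_subset (isCompact_univ_pi fun _ : ℝ => hKcompact) hAclosed
      (fun f hf t _ => hf.1.1.1 t)
  have hmem : ∀ γ' : ℝ → EuclideanSpace ℝ (Fin n), IsPathIn F γ' x y →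
      LipschitzOnWith C γ' (Icc 0 1) → (∀ t, γ' t = γ' (max 0 (min 1 t))) → γ' ∈ A := by
    intro γ' hp hl hc
    refine ⟨⟨⟨fun t => ?_, hl⟩, hp.2.2.1⟩, hp.2.2.2⟩
    rw [hc t]
    have hu : max 0 (min 1 t) ∈ Icc (0:ℝ) 1 :=
      ⟨le_max_left _ _, max_le zero_le_one (min_le_left _ _)⟩
    refine ⟨hp.2.1 _ hu, ?_⟩
    rw [Metric.mem_closedBall]
    have hd := hl.dist_le_mul _ hu 0 ⟨le_rfl, zero_le_one⟩
    rw [hp.2.2.1] at hd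
    calc dist (γ' (max 0 (min 1 t))) x ≤ C * dist (max 0 (min 1 t)) 0 := hd
      _ ≤ C * 1 := by
          refine mul_le_mul_of_nonneg_left ?_ C.coe_nonneg
          rw [Real.dist_eq, sub_zero, abs_of_nonneg hu.1]
          exact hu.2
      _ = C := mul_one _
  have hAne : A.Nonempty := by
    obtain ⟨γ', hp, hv, hl, hc⟩ := reparam hγ₀ hfin₀ hV₀C
    exact ⟨γ', hmem γ' hp hl hc⟩
  obtain ⟨f₀, hf₀A, hf₀min⟩ := lsc_min_on_compact hAcompact hAne evar_lsc
  refine ⟨f₀, ⟨hf₀A.1.1.2.continuousOn, fun s hs => (hf₀A.1.1.1 s).1,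
    hf₀A.1.2, hf₀A.2⟩, ?_⟩
  intro γ' hγ'
  by_cases htop : eVariationOn γ' (Icc 0 1) = ⊤
  · rw [htop]; exact le_top
  by_contra hlt
  push_neg at hlt
  have hbound : eVariationOn f₀ (Icc 0 1) ≤ V₀ := by
    obtain ⟨γ'', hp, hv, hl, hc⟩ := reparam hγ₀ hfin₀ hV₀C
    exact (hf₀min γ'' (hmem γ'' hp hl hc)).trans hv
  have hγ'C : eVariationOn γ' (Icc 0 1) ≤ (C : ℝ≥0∞) :=
    (hlt.le.trans hbound).trans hV₀C
  obtain ⟨γ'', hp, hv, hl, hc⟩ := reparam hγ' htop hγ'C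
  exact absurd (((hf₀min γ'' (hmem γ'' hp hl hc)).trans hv).trans_lt hlt) (lt_irrefl _)
end
end

section
/- Let 𝒳 ⊆ ℝⁿ be open and convex, 𝒪 ⊆ 𝒳 closed, 𝒳_free := closure(𝒳) \ interior(𝒪), and let x_a, x ∈ 𝒳_free. Then the following are equivalent: (i) there exists a path γ in 𝒳_free from x_a to x such that for all s, t ∈ [0,1] the point (1−t)·γ(s) + t·x_a does not lie in interior(𝒪); (ii) the segment [x_a, x] does not meet interior(𝒪). (This identifies the non-entangled free workspace of the Obstacle-free Linear Homotopy definition with the set of points visible from the anchor x_a.) -/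
open Set

noncomputable section

/-- The non-entangled free workspace of the Obstacle-free Linear Homotopy definition is the
set of points visible from the anchor. -/
theorem stmt_4 {n : ℕ} (𝒳 𝒪 : Set (EuclideanSpace ℝ (Fin n)))
    (hXopen : IsOpen 𝒳) (hXconv : Convex ℝ 𝒳) (hOclosed : IsClosed 𝒪) (hOX : 𝒪 ⊆ 𝒳)
    (xa x : EuclideanSpace ℝ (Fin n))
    (hxa : xa ∈ closure 𝒳 \ interior 𝒪) (hx : x ∈ closure 𝒳 \ interior 𝒪) :
    (∃ γ : ℝ → EuclideanSpace ℝ (Fin n),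
        IsPathIn (closure 𝒳 \ interior 𝒪) γ xa x ∧
        ∀ s ∈ Icc (0:ℝ) 1, ∀ t ∈ Icc (0:ℝ) 1, (1 - t) • γ s + t • xa ∉ interior 𝒪) ↔
      segment ℝ xa x ∩ interior 𝒪 = ∅ := by
  constructor
  · rintro ⟨γ, ⟨_, _, _, hγ1⟩, h⟩
    rw [eq_empty_iff_forall_notMem]
    rintro p ⟨⟨a, b, ha, hb, hab, rfl⟩, hpO⟩
    have := h 1 (by norm_num) a ⟨ha, by linarith⟩
    rw [hγ1] at this
    apply this
    have : (1 - a) = b := by linarith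
    rw [this, add_comm]
    exact hpO
  · intro hseg
    refine ⟨linePath xa x, ⟨?_, ?_, ?_, ?_⟩, ?_⟩
    · exact (Continuous.continuousOn (by unfold linePath; continuity))
    · intro s hs
      constructor
      · exact (hXconv.closure) hxa.1 hx.1 (by linarith [hs.2]) hs.1 (by ring)
      · intro hmem
        have hsm : linePath xa x s ∈ segment ℝ xa x :=
          ⟨1 - s, s, by linarith [hs.2], hs.1, by ring, rfl⟩
        exact absurd (mem_inter hsm hmem) (by rw [hseg]; exact notMem_empty _)
    · simp [linePath]
    · simp [linePath]
    · intro s hs t ht hmem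
      have hsm : linePath xa x s ∈ segment ℝ xa x :=
        ⟨1 - s, s, by linarith [hs.2], hs.1, by ring, rfl⟩
      have hxam : xa ∈ segment ℝ xa x := left_mem_segment ℝ xa x
      have : (1 - t) • linePath xa x s + t • xa ∈ segment ℝ xa x :=
        (convex_segment xa x) hsm hxam (by linarith [ht.2] : (0:ℝ) ≤ 1 - t) ht.1 (by ring)
      exact absurd (mem_inter this hmem) (by rw [hseg]; exact notMem_empty _)
end
end

section
/- Let 𝒳 ⊆ ℝ² be open and convex, 𝒪 ⊆ 𝒳 closed, 𝒳_free := closure(𝒳) \ interior(𝒪), and let x_a, x ∈ 𝒳_free be joined by a path of finite length in 𝒳_free. Then there exists a path γ in 𝒳_free from x_a to x such that for all 0 ≤ s₁ ≤ s₂ ≤ 1 with γ(s₁) = γ(s₂), the restricted path γ|[s₁,s₂] is path-homotopic within 𝒳_free to the constant path at γ(s₁). (Hence every point of 𝒳_free joined to the anchor by a finite-length free path is reachable by a tether configuration that is non-entangled in the sense of the 2D Tether Loop around Obstacle definition.) -/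
open Set

noncomputable section

open scoped ENNReal NNReal

section AuxLemmas
variable {E : Type*} [PseudoEMetricSpace E]
/-- Key claim: one can almost compute the variation on `[t,b]` as
`edist (f t) (f w) + variation on [w,b]` for some `w > t`. -/
lemma claim_right {f : ℝ → E} {t b : ℝ} (htb : t < b)
    (hfin : eVariationOn f (Icc t b) ≠ ⊤) {ε : ℝ≥0∞} (hε0 : ε ≠ 0) :
    ∃ w ∈ Ioc t b,
      eVariationOn f (Icc t b) ≤ edist (f t) (f w) + eVariationOn f (Icc w b) + ε := by
  classical
  set Wb := eVariationOn f (Icc t b) with hWb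
  by_cases hle : Wb ≤ ε
  · exact ⟨b, ⟨htb, le_refl _⟩, hle.trans (le_add_self)⟩
  push_neg at hle
  have hWne0 : Wb ≠ 0 := by
    intro h; rw [h] at hle; exact (not_lt_of_ge (zero_le (a := ε))) hle
  have h1 : Wb - ε < Wb := ENNReal.sub_lt_self hfin hWne0 hε0
  rw [hWb] at h1
  obtain ⟨⟨n, ⟨u, hu, us⟩⟩, hlt⟩ :
      ∃ p : ℕ × { u : ℕ → ℝ // Monotone u ∧ ∀ i, u i ∈ Icc t b },
        Wb - ε < ∑ i ∈ Finset.range p.1, edist (f ((p.2 : ℕ → ℝ) (i + 1))) (f ((p.2 : ℕ → ℝ) i)) :=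
    lt_iSup_iff.mp h1
  have hWlt : Wb < (∑ i ∈ Finset.range n, edist (f (u (i + 1))) (f (u i))) + ε := by
    have hεtop : ε ≠ ⊤ := fun h => hfin (top_le_iff.mp (h ▸ hle.le))
    calc Wb = Wb - ε + ε := (tsub_add_cancel_of_le hle.le).symm
      _ < _ + ε := ENNReal.add_lt_add_right hεtop hlt
  have ht_mem : t ∈ Icc t b := ⟨le_refl _, htb.le⟩
  obtain ⟨v, m, hv, vs, himg, hsum⟩ := eVariationOn.add_point f ht_mem u hu us n
  have hWlt' : Wb < (∑ j ∈ Finset.range m, edist (f (v (j + 1))) (f (v j))) + ε :=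
    hWlt.trans_le (add_le_add_left hsum _)
  obtain ⟨j₀, hj₀m, hj₀⟩ := himg
  have hm : 0 < m := lt_of_le_of_lt (Nat.zero_le _) hj₀m
  set P : ℕ → Prop := fun k => v k = t with hP
  set j := Nat.findGreatest P (m - 1) with hj_def
  have hj₀le : j₀ ≤ m - 1 := Nat.le_sub_one_of_lt hj₀m
  have hPj : P j := Nat.findGreatest_spec hj₀le hj₀
  have hjm : j < m := lt_of_le_of_lt (Nat.findGreatest_le _) (Nat.sub_lt hm one_pos)
  have hvj : v j = t := hPj
  have hvi_t : ∀ i ≤ j, v i = t := fun i hi =>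
    le_antisymm (hvj ▸ hv hi) (vs i).1
  by_cases hlast : v (j + 1) = t
  -- degenerate case: all points equal t, sum is 0, contradiction with ε < Wb
  · exfalso
    have hj1 : j + 1 = m := by
      by_contra hne
      have hj1le : j + 1 ≤ m - 1 := by omega
      exact Nat.findGreatest_is_greatest (Nat.lt_succ_self j) hj1le hlast
    have hall : ∀ i ≤ m, v i = t := by
      intro i hi
      rcases le_or_gt i j with h | h
      · exact hvi_t i h
      · have : i = m := by omega
        rw [this, ← hj1]; exact hlast
    have hzero : (∑ i ∈ Finset.range m, edist (f (v (i + 1))) (f (v i))) = 0 := by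
      apply Finset.sum_eq_zero
      intro i hi
      rw [Finset.mem_range] at hi
      rw [hall (i+1) (by omega), hall i (by omega), edist_self]
    rw [hzero, zero_add] at hWlt'
    exact absurd hWlt' (not_lt_of_ge hle.le)
  · set w := v (j + 1) with hw_def
    have hwt : t < w := lt_of_le_of_ne ((vs (j+1)).1) (Ne.symm hlast)
    refine ⟨w, ⟨hwt, (vs (j+1)).2⟩, ?_⟩
    -- split the sum
    have hj1m : j + 1 ≤ m := hjm
    have hsplit : (∑ i ∈ Finset.range m, edist (f (v (i + 1))) (f (v i)))
        = (∑ i ∈ Finset.range (j+1), edist (f (v (i + 1))) (f (v i)))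
          + ∑ i ∈ Finset.Ico (j+1) m, edist (f (v (i + 1))) (f (v i)) := by
      rw [Finset.range_eq_Ico, Finset.range_eq_Ico]
      exact (Finset.sum_Ico_consecutive _ (Nat.zero_le _) hj1m).symm
    have hfirst : (∑ i ∈ Finset.range (j+1), edist (f (v (i + 1))) (f (v i)))
        = edist (f w) (f t) := by
      rw [Finset.sum_eq_single_of_mem j (Finset.self_mem_range_succ j)]
      · rw [hvj]
      · intro i hi hne
        rw [Finset.mem_range] at hi
        have hij : i < j := by omega
        rw [hvi_t (i+1) (by omega), hvi_t i (by omega), edist_self]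
    have hsecond : (∑ i ∈ Finset.Ico (j+1) m, edist (f (v (i + 1))) (f (v i)))
        ≤ eVariationOn f (Icc w b) := by
      rw [Finset.sum_Ico_eq_sum_range]
      have : ∀ i, edist (f (v (j + 1 + i + 1))) (f (v (j + 1 + i)))
          = edist (f ((fun k => v (j + 1 + k)) (i + 1))) (f ((fun k => v (j + 1 + k)) i)) := by
        intro i; congr 2 <;> omega
      calc (∑ i ∈ Finset.range (m - (j+1)), edist (f (v (j + 1 + i + 1))) (f (v (j + 1 + i))))
          = ∑ i ∈ Finset.range (m - (j+1)),
              edist (f ((fun k => v (j + 1 + k)) (i + 1))) (f ((fun k => v (j + 1 + k)) i)) := by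
            exact Finset.sum_congr rfl fun i _ => this i
        _ ≤ eVariationOn f (Icc w b) := by
            apply eVariationOn.sum_le (fun a b hab => hv (by omega))
            intro i
            exact ⟨hv (Nat.le_add_right _ _), (vs _).2⟩
    calc Wb ≤ (∑ j ∈ Finset.range m, edist (f (v (j + 1)) ) (f (v j))) + ε := hWlt'.le
      _ = (edist (f w) (f t) + ∑ i ∈ Finset.Ico (j+1) m, edist (f (v (i + 1))) (f (v i))) + ε := by
          rw [hsplit, hfirst]
      _ ≤ (edist (f t) (f w) + eVariationOn f (Icc w b)) + ε := by
          rw [edist_comm (f w) (f t)]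
          exact add_le_add_left (add_le_add_right hsecond _) _
      _ = edist (f t) (f w) + eVariationOn f (Icc w b) + ε := by ring

variable {E : Type*} [PseudoEMetricSpace E]

lemma right_small {f : ℝ → E} {A B t : ℝ} (ht : t ∈ Icc A B)
    (hcont : ContinuousWithinAt f (Icc A B) t)
    (hfin : eVariationOn f (Icc A B) ≠ ⊤) {ε : ℝ≥0∞} (hε0 : ε ≠ 0) (hεtop : ε ≠ ⊤) :
    ∃ δ > (0:ℝ), ∀ v, t ≤ v → v ≤ B → v - t < δ → eVariationOn f (Icc t v) ≤ ε := by
  have hε2 : ε / 2 ≠ 0 := by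
    simp [ENNReal.div_eq_zero_iff, hε0]
  rcases eq_or_lt_of_le ht.2 with hB | htB
  · -- t = B
    refine ⟨1, one_pos, fun v hv1 hv2 _ => ?_⟩
    have : v = t := le_antisymm (hB ▸ hv2) hv1
    rw [this]
    rw [Icc_self]
    rw [eVariationOn.subsingleton f subsingleton_singleton]
    exact zero_le
  · -- find δ₀ from continuity
    have hball : {y : E | edist y (f t) < ε / 2} ∈ nhds (f t) :=
      EMetric.ball_mem_nhds _ (pos_iff_ne_zero.mpr hε2)
    have hev : ∀ᶠ z in nhdsWithin t (Icc A B), edist (f z) (f t) < ε / 2 := hcont hball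
    obtain ⟨δ₀, hδ₀, hsub⟩ := Metric.mem_nhdsWithin_iff.mp hev
    have hδ₀prop : ∀ z ∈ Icc A B, dist z t < δ₀ → edist (f z) (f t) < ε / 2 :=
      fun z hz hd => hsub ⟨Metric.mem_ball.mpr hd, hz⟩
    set b := min B (t + δ₀ / 2) with hb_def
    have htb : t < b := lt_min htB (by linarith)
    have hbB : b ≤ B := min_le_left _ _
    have hIsub : Icc t b ⊆ Icc A B := Icc_subset_Icc ht.1 hbB
    have hedist : ∀ z ∈ Icc t b, edist (f z) (f t) ≤ ε / 2 := by
      intro z hz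
      have hzAB : z ∈ Icc A B := hIsub hz
      have : dist z t < δ₀ := by
        rw [Real.dist_eq, abs_of_nonneg (sub_nonneg.mpr hz.1)]
        have : z ≤ t + δ₀ / 2 := hz.2.trans (min_le_right _ _)
        linarith
      exact (hδ₀prop z hzAB this).le
    have hfin' : eVariationOn f (Icc t b) ≠ ⊤ :=
      fun h => hfin (top_le_iff.mp (h ▸ eVariationOn.mono f hIsub))
    obtain ⟨w, hw, hclaim⟩ := claim_right htb hfin' hε2
    refine ⟨w - t, sub_pos.mpr hw.1, fun v hv1 hv2 hv3 => ?_⟩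
    have hvw : v < w := by linarith
    have hvb : v ≤ b := hvw.le.trans hw.2
    -- split variation
    have hsplit := eVariationOn.Icc_add_Icc f (s := Icc t b) hv1 hvb ⟨hv1, hvb⟩
    rw [inter_eq_self_of_subset_right (Icc_subset_Icc_right hvb),
        inter_eq_self_of_subset_right (Icc_subset_Icc_left hv1),
        inter_self] at hsplit
    have hmono : eVariationOn f (Icc w b) ≤ eVariationOn f (Icc v b) :=
      eVariationOn.mono f (Icc_subset_Icc_left hvw.le)
    have hvbfin : eVariationOn f (Icc v b) ≠ ⊤ :=
      fun h => hfin' (top_le_iff.mp (h ▸ eVariationOn.mono f (Icc_subset_Icc_left hv1)))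
    have hchain : eVariationOn f (Icc t v) + eVariationOn f (Icc v b)
        ≤ ε + eVariationOn f (Icc v b) := by
      rw [hsplit]
      calc eVariationOn f (Icc t b)
          ≤ edist (f t) (f w) + eVariationOn f (Icc w b) + ε / 2 := hclaim
        _ ≤ ε / 2 + eVariationOn f (Icc v b) + ε / 2 := by
            refine add_le_add_left (add_le_add ?_ hmono) _
            rw [edist_comm]
            exact hedist w ⟨hw.1.le, hw.2⟩
        _ = ε + eVariationOn f (Icc v b) := by
            rw [add_comm (ε/2) (eVariationOn f (Icc v b)), add_assoc,
              ENNReal.add_halves, add_comm]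
    exact (ENNReal.add_le_add_iff_right hvbfin).mp hchain

lemma left_small {f : ℝ → E} {A B t : ℝ} (ht : t ∈ Icc A B)
    (hcont : ContinuousWithinAt f (Icc A B) t)
    (hfin : eVariationOn f (Icc A B) ≠ ⊤) {ε : ℝ≥0∞} (hε0 : ε ≠ 0) (hεtop : ε ≠ ⊤) :
    ∃ δ > (0:ℝ), ∀ v, A ≤ v → v ≤ t → t - v < δ → eVariationOn f (Icc v t) ≤ ε := by
  set g : ℝ → E := f ∘ Neg.neg with hg
  have hanti : ∀ u v : ℝ, AntitoneOn (Neg.neg : ℝ → ℝ) (Icc u v) :=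
    fun u v a _ b _ hab => neg_le_neg hab
  have himg : ∀ u v : ℝ, (Neg.neg : ℝ → ℝ) '' Icc u v = Icc (-v) (-u) := by
    intro u v
    exact Set.image_neg_Icc (a := u) (b := v)
  have hvar : ∀ u v : ℝ, eVariationOn g (Icc u v) = eVariationOn f (Icc (-v) (-u)) := by
    intro u v
    rw [hg, eVariationOn.comp_eq_of_antitoneOn f Neg.neg (hanti u v), himg]
  have ht' : -t ∈ Icc (-B) (-A) := ⟨neg_le_neg ht.2, neg_le_neg ht.1⟩
  have hcont' : ContinuousWithinAt g (Icc (-B) (-A)) (-t) := by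
    have hmaps : MapsTo (Neg.neg : ℝ → ℝ) (Icc (-B) (-A)) (Icc A B) := by
      intro z hz; exact ⟨le_neg.mp hz.2, neg_le.mp hz.1⟩
    have : ContinuousWithinAt (Neg.neg : ℝ → ℝ) (Icc (-B) (-A)) (-t) :=
      continuous_neg.continuousWithinAt
    exact ContinuousWithinAt.comp (by rwa [neg_neg]) this hmaps
  have hfin' : eVariationOn g (Icc (-B) (-A)) ≠ ⊤ := by
    rw [hvar]; simpa using hfin
  obtain ⟨δ, hδ, hprop⟩ := right_small ht' hcont' hfin' hε0 hεtop
  refine ⟨δ, hδ, fun v hAv hvt hv3 => ?_⟩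
  have := hprop (-v) (neg_le_neg hvt) (neg_le_neg hAv) (by linarith)
  rwa [hvar, neg_neg, neg_neg] at this

/-- KEY: near any point of `[0,1]`, the variation of a continuous finite-variation
function on small subintervals is small. -/
lemma var_small_near {f : ℝ → E} (hf : ContinuousOn f (Icc 0 1))
    (hfin : eVariationOn f (Icc 0 1) ≠ ⊤) {t : ℝ} (ht : t ∈ Icc (0:ℝ) 1)
    {ε : ℝ≥0∞} (hε0 : ε ≠ 0) (hεtop : ε ≠ ⊤) :
    ∃ δ > (0:ℝ), ∀ v ∈ Icc (0:ℝ) 1, |v - t| < δ →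
      eVariationOn f (Icc (min t v) (max t v)) ≤ ε := by
  obtain ⟨δ₁, hδ₁, h₁⟩ := right_small ht (hf t ht) hfin hε0 hεtop
  obtain ⟨δ₂, hδ₂, h₂⟩ := left_small ht (hf t ht) hfin hε0 hεtop
  refine ⟨min δ₁ δ₂, lt_min hδ₁ hδ₂, fun v hv hlt => ?_⟩
  rcases le_total t v with h | h
  · rw [min_eq_left h, max_eq_right h]
    refine h₁ v h hv.2 ?_
    have h' := abs_lt.mp hlt
    have hm := min_le_left δ₁ δ₂
    linarith [h'.2]
  · rw [min_eq_right h, max_eq_left h]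
    refine h₂ v hv.1 h ?_
    have h' := abs_lt.mp hlt
    have hm := min_le_right δ₁ δ₂
    linarith [h'.1]

end AuxLemmas

section AuxMin
variable {E : Type*} [EMetricSpace E]

variable {E : Type*} [EMetricSpace E]

/-- Total variation on `[0,1]` attains a minimum on a nonempty compact set of functions
(with the product topology). -/
lemma exists_var_min [T2Space E] {A : Set (ℝ → E)} (hA : IsCompact A) (hne : A.Nonempty) :
    ∃ γ ∈ A, ∀ g ∈ A, eVariationOn γ (Icc 0 1) ≤ eVariationOn g (Icc 0 1) := by
  classical
  set Φ : (ℝ → E) → ℝ≥0∞ := fun g => eVariationOn g (Icc 0 1) with hΦ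
  have lsc : LowerSemicontinuous Φ := by
    intro g v hv
    exact eVariationOn.lowerSemicontinuous_aux (F := fun h : ℝ → E => h) (p := nhds g)
      (fun z _ => ((continuous_apply z).tendsto g)) hv
  set m := sInf (Φ '' A) with hm
  by_cases hmtop : m = ⊤
  · obtain ⟨γ, hγ⟩ := hne
    refine ⟨γ, hγ, fun g hg => ?_⟩
    have h : eVariationOn g (Icc 0 1) = ⊤ := sInf_eq_top.mp hmtop _ ⟨g, hg, rfl⟩
    rw [h]
    exact le_top
  · set C : ℕ → Set (ℝ → E) := fun n => A ∩ {g | Φ g ≤ m + (↑(n + 1))⁻¹} with hC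
    have hCne : ∀ n, (C n).Nonempty := by
      intro n
      have hpos : ((↑(n + 1) : ℝ≥0∞))⁻¹ ≠ 0 := by simp
      have : m < m + (↑(n + 1) : ℝ≥0∞)⁻¹ := ENNReal.lt_add_right hmtop hpos
      obtain ⟨y, ⟨g, hg, rfl⟩, hy⟩ := sInf_lt_iff.mp this
      exact ⟨g, hg, hy.le⟩
    have hCcl : ∀ n, IsClosed (C n) :=
      fun n => hA.isClosed.inter (lsc.isClosed_preimage _)
    have hCcomp : ∀ n, IsCompact (C n) := fun n => hA.inter_right (lsc.isClosed_preimage _)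
    have hCdec : ∀ n, C (n + 1) ⊆ C n := by
      intro n g hg
      refine ⟨hg.1, hg.2.trans (add_le_add_right ?_ m)⟩
      apply ENNReal.inv_le_inv.mpr
      exact_mod_cast Nat.le_succ (n + 1)
    obtain ⟨γ, hγ⟩ := IsCompact.nonempty_iInter_of_sequence_nonempty_isCompact_isClosed
      C hCdec hCne (hCcomp 0) hCcl
    simp only [mem_iInter] at hγ
    have hγA : γ ∈ A := (hγ 0).1
    refine ⟨γ, hγA, fun g hg => ?_⟩
    have hΦγ : Φ γ ≤ m := by
      have htend : Filter.Tendsto (fun n : ℕ => m + (↑(n + 1) : ℝ≥0∞)⁻¹)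
          Filter.atTop (nhds m) := by
        have h0 : Filter.Tendsto (fun n : ℕ => ((↑(n + 1) : ℝ≥0∞))⁻¹)
            Filter.atTop (nhds 0) := by
          have := ENNReal.tendsto_inv_nat_nhds_zero
          exact this.comp (Filter.tendsto_add_atTop_nat 1)
        simpa using Filter.Tendsto.const_add m h0
      exact ge_of_tendsto' htend fun n => (hγ n).2
    exact hΦγ.trans (sInf_le ⟨g, hg, rfl⟩)

end AuxMin

/-- Every point of the free workspace joined to the anchor by a finite-length free path is
reachable by a tether configuration that is non-entangled in the sense of the
2D Tether Loop around Obstacle definition. -/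
theorem stmt_5 (𝒳 𝒪 : Set (EuclideanSpace ℝ (Fin 2)))
    (hXopen : IsOpen 𝒳) (hXconv : Convex ℝ 𝒳) (hOclosed : IsClosed 𝒪) (hOX : 𝒪 ⊆ 𝒳)
    (xa x : EuclideanSpace ℝ (Fin 2))
    (hxa : xa ∈ closure 𝒳 \ interior 𝒪) (hx : x ∈ closure 𝒳 \ interior 𝒪)
    (hjoin : ∃ γ₀ : ℝ → EuclideanSpace ℝ (Fin 2),
      IsPathIn (closure 𝒳 \ interior 𝒪) γ₀ xa x ∧ eVariationOn γ₀ (Icc 0 1) ≠ ⊤) :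
    ∃ γ : ℝ → EuclideanSpace ℝ (Fin 2),
      IsPathIn (closure 𝒳 \ interior 𝒪) γ xa x ∧
      ∀ s₁ s₂ : ℝ, 0 ≤ s₁ → s₁ ≤ s₂ → s₂ ≤ 1 → γ s₁ = γ s₂ →
        PathHomotopicIn (closure 𝒳 \ interior 𝒪) (subPath γ s₁ s₂) (fun _ => γ s₁) := by
  classical
  obtain ⟨γ₀, ⟨h0cont, h0mem, h0a, h0b⟩, h0fin⟩ := hjoin
  set F : Set (EuclideanSpace ℝ (Fin 2)) := closure 𝒳 \ interior 𝒪 with hFdef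
  have hFclosed : IsClosed F := isClosed_closure.sdiff isOpen_interior
  set K : Set (EuclideanSpace ℝ (Fin 2)) := γ₀ '' Icc 0 1 with hKdef
  have hKcomp : IsCompact K := (isCompact_Icc).image_of_continuousOn h0cont
  have hxaK : xa ∈ K := ⟨0, left_mem_Icc.mpr zero_le_one, h0a⟩
  set piK : ℝ → Set (EuclideanSpace ℝ (Fin 2)) :=
    fun s => if s ∈ Icc (0:ℝ) 1 then K else {xa} with hpiKdef
  set μ : ℝ → ℝ → ℝ≥0∞ := fun u v => eVariationOn γ₀ (Icc u v) with hμdef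
  set A : Set (ℝ → EuclideanSpace ℝ (Fin 2)) :=
    (univ.pi piK) ∩
    ({g | ∀ u ∈ Icc (0:ℝ) 1, ∀ v ∈ Icc (0:ℝ) 1, u ≤ v → edist (g u) (g v) ≤ μ u v} ∩
     ({g | g 0 = xa} ∩ ({g | g 1 = x} ∩ {g | ∀ s ∈ Icc (0:ℝ) 1, g s ∈ F}))) with hAdef
  -- compactness of A
  have hpiComp : IsCompact (univ.pi piK) := by
    apply isCompact_univ_pi
    intro s
    simp only [hpiKdef]
    by_cases h : s ∈ Icc (0:ℝ) 1
    · rw [if_pos h]; exact hKcomp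
    · rw [if_neg h]; exact isCompact_singleton
  have hB1closed : IsClosed {g : ℝ → EuclideanSpace ℝ (Fin 2) |
      ∀ u ∈ Icc (0:ℝ) 1, ∀ v ∈ Icc (0:ℝ) 1, u ≤ v → edist (g u) (g v) ≤ μ u v} := by
    have heq : {g : ℝ → EuclideanSpace ℝ (Fin 2) |
        ∀ u ∈ Icc (0:ℝ) 1, ∀ v ∈ Icc (0:ℝ) 1, u ≤ v → edist (g u) (g v) ≤ μ u v}
        = ⋂ u ∈ Icc (0:ℝ) 1, ⋂ v ∈ Icc (0:ℝ) 1, ⋂ (_ : u ≤ v),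
            {g : ℝ → EuclideanSpace ℝ (Fin 2) | edist (g u) (g v) ≤ μ u v} := by
      ext g; simp only [mem_setOf_eq, mem_iInter]
    rw [heq]
    refine isClosed_biInter fun u _ => isClosed_biInter fun v _ => isClosed_iInter fun _ => ?_
    exact isClosed_le (Continuous.edist (continuous_apply u) (continuous_apply v))
      continuous_const
  have hAclosed : IsClosed A := by
    rw [hAdef]
    refine IsClosed.inter (isClosed_set_pi fun s _ => ?_) (IsClosed.inter hB1closed
      (IsClosed.inter (isClosed_eq (continuous_apply 0) continuous_const)
        (IsClosed.inter (isClosed_eq (continuous_apply 1) continuous_const) ?_)))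
    · simp only [hpiKdef]
      by_cases h : s ∈ Icc (0:ℝ) 1
      · rw [if_pos h]; exact hKcomp.isClosed
      · rw [if_neg h]; exact isClosed_singleton
    · have heq : {g : ℝ → EuclideanSpace ℝ (Fin 2) | ∀ s ∈ Icc (0:ℝ) 1, g s ∈ F}
          = ⋂ s ∈ Icc (0:ℝ) 1, (fun g : ℝ → EuclideanSpace ℝ (Fin 2) => g s) ⁻¹' F := by
        ext g; simp only [mem_setOf_eq, mem_iInter, mem_preimage]
      rw [heq]
      exact isClosed_biInter fun s _ => hFclosed.preimage (continuous_apply s)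
  have hAcomp : IsCompact A :=
    IsCompact.of_isClosed_subset hpiComp hAclosed inter_subset_left
  -- nonemptiness of A
  set γ₀' : ℝ → EuclideanSpace ℝ (Fin 2) :=
    fun s => if s ∈ Icc (0:ℝ) 1 then γ₀ s else xa with hγ₀'def
  have h0'eq : EqOn γ₀' γ₀ (Icc 0 1) := fun s hs => by
    simp only [hγ₀'def]; rw [if_pos hs]
  have hγ₀'A : γ₀' ∈ A := by
    refine ⟨fun s _ => ?_, fun u hu v hv huv => ?_, ?_, ?_, fun s hs => ?_⟩
    · simp only [hγ₀'def, hpiKdef]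
      by_cases h : s ∈ Icc (0:ℝ) 1
      · rw [if_pos h, if_pos h]; exact mem_image_of_mem γ₀ h
      · rw [if_neg h, if_neg h]; exact rfl
    · rw [h0'eq hu, h0'eq hv]
      exact eVariationOn.edist_le γ₀ ⟨le_rfl, huv⟩ ⟨huv, le_rfl⟩
    · show γ₀' 0 = xa
      rw [h0'eq (left_mem_Icc.mpr zero_le_one)]; exact h0a
    · show γ₀' 1 = x
      rw [h0'eq (right_mem_Icc.mpr zero_le_one)]; exact h0b
    · rw [h0'eq hs]; exact h0mem s hs
  -- minimizer
  obtain ⟨γ, hγA, hmin⟩ := exists_var_min hAcomp ⟨γ₀', hγ₀'A⟩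
  obtain ⟨hγpi, hγed, hγ0, hγ1, hγF⟩ := hγA
  have hγfin : eVariationOn γ (Icc 0 1) ≠ ⊤ := by
    intro h
    have h1 := hmin γ₀' hγ₀'A
    rw [h, eVariationOn.eq_of_eqOn h0'eq] at h1
    exact h0fin (top_le_iff.mp h1)
  -- continuity of the minimizer
  have hγcont : ContinuousOn γ (Icc 0 1) := by
    intro t ht
    rw [ContinuousWithinAt, EMetric.tendsto_nhdsWithin_nhds]
    intro ε hε
    set ε' : ℝ≥0∞ := min ε 1 / 2 with hε'def
    have hmin0 : min ε 1 ≠ 0 := by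
      simp only [ne_eq, min_eq_iff, not_or]
      constructor
      · rintro ⟨h, -⟩; exact (ne_of_gt hε) h
      · rintro ⟨h, -⟩; exact one_ne_zero h
    have hmintop : min ε 1 ≠ ⊤ := ne_top_of_le_ne_top ENNReal.one_ne_top (min_le_right _ _)
    have hε'0 : ε' ≠ 0 := by
      rw [hε'def]
      simp [ENNReal.div_eq_zero_iff, hmin0]
    have hε'top : ε' ≠ ⊤ := by
      rw [hε'def]
      exact ne_top_of_le_ne_top hmintop ENNReal.half_le_self
    have hε'lt : ε' < ε :=
      lt_of_lt_of_le (ENNReal.half_lt_self hmin0 hmintop) (min_le_left _ _)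
    obtain ⟨δ, hδ, hδp⟩ := var_small_near h0cont h0fin ht hε'0 hε'top
    refine ⟨ENNReal.ofReal δ, ENNReal.ofReal_pos.mpr hδ, ?_⟩
    intro v hv hdist
    have hvt : |v - t| < δ := by
      rw [edist_dist] at hdist
      rw [← Real.dist_eq]
      exact (ENNReal.ofReal_lt_ofReal_iff hδ).mp hdist
    rcases le_total v t with h | h
    · calc edist (γ v) (γ t) ≤ μ v t := hγed v hv t ht h
        _ = eVariationOn γ₀ (Icc (min t v) (max t v)) := by
            rw [min_eq_right h, max_eq_left h]
        _ ≤ ε' := hδp v hv hvt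
        _ < ε := hε'lt
    · calc edist (γ v) (γ t) = edist (γ t) (γ v) := edist_comm _ _
        _ ≤ μ t v := hγed t ht v hv h
        _ = eVariationOn γ₀ (Icc (min t v) (max t v)) := by
            rw [min_eq_left h, max_eq_right h]
        _ ≤ ε' := hδp v hv hvt
        _ < ε := hε'lt
  refine ⟨γ, ⟨hγcont, hγF, hγ0, hγ1⟩, ?_⟩
  -- the loop-contraction property
  intro s₁ s₂ h0s h12 hs21 heq
  have hs₁ : s₁ ∈ Icc (0:ℝ) 1 := ⟨h0s, h12.trans hs21⟩
  have hs₂ : s₂ ∈ Icc (0:ℝ) 1 := ⟨h0s.trans h12, hs21⟩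
  set γ' : ℝ → EuclideanSpace ℝ (Fin 2) :=
    fun s => if s ≤ s₁ then γ s else if s ≤ s₂ then γ s₁ else γ s with hγ'def
  have hval1 : ∀ s, s ≤ s₁ → γ' s = γ s := fun s h => by
    simp only [hγ'def]; rw [if_pos h]
  have hval2 : ∀ s, s₁ < s → s ≤ s₂ → γ' s = γ s₁ := fun s h h' => by
    simp only [hγ'def]; rw [if_neg (not_le.mpr h), if_pos h']
  have hval3 : ∀ s, s₂ < s → γ' s = γ s := fun s h => by
    simp only [hγ'def]
    rw [if_neg (not_le.mpr (lt_of_le_of_lt h12 h)), if_neg (not_le.mpr h)]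
  have μmono : ∀ {a b c d : ℝ}, c ≤ a → b ≤ d → μ a b ≤ μ c d := by
    intro a b c d h1 h2
    exact eVariationOn.mono γ₀ (Icc_subset_Icc h1 h2)
  have μadd : ∀ {u w v : ℝ}, u ≤ w → w ≤ v → μ u w + μ w v = μ u v := by
    intro u w v h1 h2
    have h := eVariationOn.Icc_add_Icc γ₀ (s := Icc u v) h1 h2 ⟨h1, h2⟩
    rwa [inter_eq_self_of_subset_right (Icc_subset_Icc_right h2),
      inter_eq_self_of_subset_right (Icc_subset_Icc_left h1), inter_self] at h
  have hγ'A : γ' ∈ A := by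
    refine ⟨fun s _ => ?_, fun u hu v hv huv => ?_, ?_, ?_, fun s hs => ?_⟩
    · -- membership in the product of compacts
      have hγK : ∀ z, γ z ∈ piK z := fun z => hγpi z (mem_univ z)
      by_cases hs : s ∈ Icc (0:ℝ) 1
      · have h1 : γ s ∈ piK s := hγK s
        have h2 : γ s₁ ∈ piK s := by
          have := hγK s₁
          simp only [hpiKdef] at this ⊢
          rw [if_pos hs]; rwa [if_pos hs₁] at this
        simp only [hγ'def]
        by_cases hc1 : s ≤ s₁
        · rw [if_pos hc1]; exact h1
        · rw [if_neg hc1]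
          by_cases hc2 : s ≤ s₂
          · rw [if_pos hc2]; exact h2
          · rw [if_neg hc2]; exact h1
      · -- outside [0,1] the two branch conditions force γ' s = γ s
        have hss : γ' s = γ s := by
          rcases le_or_gt s s₁ with h | h
          · exact hval1 s h
          · rcases le_or_gt s s₂ with h' | h'
            · exact absurd ⟨h0s.trans h.le, h'.trans hs21⟩ hs
            · exact hval3 s h'
        rw [hss]; exact hγK s
    · -- the metric-speed bound
      by_cases h1 : u ≤ s₁
      · by_cases h2 : v ≤ s₁
        · rw [hval1 u h1, hval1 v h2]; exact hγed u hu v hv huv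
        · have h2' : s₁ < v := not_le.mp h2
          by_cases h3 : v ≤ s₂
          · rw [hval1 u h1, hval2 v h2' h3]
            calc edist (γ u) (γ s₁) ≤ μ u s₁ := hγed u hu s₁ hs₁ h1
              _ ≤ μ u v := μmono le_rfl h2'.le
          · have h3' : s₂ < v := not_le.mp h3
            rw [hval1 u h1, hval3 v h3']
            calc edist (γ u) (γ v)
                ≤ edist (γ u) (γ s₁) + edist (γ s₁) (γ v) := edist_triangle _ _ _
              _ = edist (γ u) (γ s₁) + edist (γ s₂) (γ v) := by rw [heq]
              _ ≤ μ u s₁ + μ s₂ v :=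
                  add_le_add (hγed u hu s₁ hs₁ h1) (hγed s₂ hs₂ v hv h3'.le)
              _ ≤ μ u s₁ + μ s₁ v := add_le_add_right (μmono h12 le_rfl) _
              _ = μ u v := μadd h1 h2'.le
      · have h1' : s₁ < u := not_le.mp h1
        by_cases h3 : u ≤ s₂
        · by_cases h4 : v ≤ s₂
          · rw [hval2 u h1' h3, hval2 v (h1'.trans_le huv) h4, edist_self]
            exact zero_le
          · have h4' : s₂ < v := not_le.mp h4
            rw [hval2 u h1' h3, hval3 v h4']
            calc edist (γ s₁) (γ v) = edist (γ s₂) (γ v) := by rw [heq]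
              _ ≤ μ s₂ v := hγed s₂ hs₂ v hv h4'.le
              _ ≤ μ u v := μmono h3 le_rfl
        · have h3' : s₂ < u := not_le.mp h3
          rw [hval3 u h3', hval3 v (h3'.trans_le huv)]
          exact hγed u hu v hv huv
    · show γ' 0 = xa
      rw [hval1 0 h0s]; exact hγ0
    · show γ' 1 = x
      by_cases h : 1 ≤ s₁
      · rw [hval1 1 h]; exact hγ1
      · by_cases h' : 1 ≤ s₂
        · have hs2 : s₂ = 1 := le_antisymm hs21 h'
          rw [hval2 1 (not_le.mp h) h', heq, hs2]; exact hγ1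
        · rw [hval3 1 (not_le.mp h')]; exact hγ1
    · rcases le_or_gt s s₁ with h | h
      · rw [hval1 s h]; exact hγF s hs
      · rcases le_or_gt s s₂ with h' | h'
        · rw [hval2 s h h']; exact hγF s₁ hs₁
        · rw [hval3 s h']; exact hγF s hs
  -- minimality forces the loop to be constant
  have hdec : ∀ g : ℝ → EuclideanSpace ℝ (Fin 2),
      eVariationOn g (Icc 0 1) = eVariationOn g (Icc 0 s₁)
        + (eVariationOn g (Icc s₁ s₂) + eVariationOn g (Icc s₂ 1)) := by
    intro g
    have h1 := eVariationOn.Icc_add_Icc g (s := Icc (0:ℝ) 1) h0s (h12.trans hs21) hs₁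
    have h2 := eVariationOn.Icc_add_Icc g (s := Icc (0:ℝ) 1) h12 hs21 hs₂
    rw [inter_eq_self_of_subset_right (Icc_subset_Icc_right hs₁.2),
      inter_eq_self_of_subset_right (Icc_subset_Icc_left hs₁.1), inter_self] at h1
    rw [inter_eq_self_of_subset_right (Icc_subset_Icc hs₁.1 hs₂.2),
      inter_eq_self_of_subset_right (Icc_subset_Icc_left hs₂.1),
      inter_eq_self_of_subset_right (Icc_subset_Icc_left hs₁.1)] at h2
    rw [← h1, ← h2]
  have he1 : eVariationOn γ' (Icc 0 s₁) = eVariationOn γ (Icc 0 s₁) :=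
    eVariationOn.eq_of_eqOn fun s hs => hval1 s hs.2
  have he3 : eVariationOn γ' (Icc s₂ 1) = eVariationOn γ (Icc s₂ 1) := by
    apply eVariationOn.eq_of_eqOn
    intro s hs
    rcases le_or_gt s s₁ with h | h
    · exact hval1 s h
    · rcases le_or_gt s s₂ with h' | h'
      · have hs2 : s = s₂ := le_antisymm h' hs.1
        rw [hval2 s h h', hs2]; exact heq
      · exact hval3 s h'
  have he2 : eVariationOn γ' (Icc s₁ s₂) = 0 := by
    apply eVariationOn.constant_on
    have hv : ∀ c ∈ Icc s₁ s₂, γ' c = γ s₁ := by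
      intro c hc
      rcases le_or_gt c s₁ with h | h
      · rw [hval1 c h, le_antisymm h hc.1]
      · exact hval2 c h hc.2
    rintro _ ⟨a, ha, rfl⟩ _ ⟨b, hb, rfl⟩
    rw [hv a ha, hv b hb]
  have hfin1 : eVariationOn γ (Icc 0 s₁) ≠ ⊤ := fun h =>
    hγfin (top_le_iff.mp (h ▸ eVariationOn.mono γ (Icc_subset_Icc_right hs₁.2)))
  have hfin3 : eVariationOn γ (Icc s₂ 1) ≠ ⊤ := fun h =>
    hγfin (top_le_iff.mp (h ▸ eVariationOn.mono γ (Icc_subset_Icc_left hs₂.1)))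
  have hkey : eVariationOn γ (Icc s₁ s₂) = 0 := by
    have hle := hmin γ' hγ'A
    rw [hdec γ, hdec γ', he1, he2, he3, zero_add] at hle
    have hle2 := (ENNReal.add_le_add_iff_left hfin1).mp hle
    have hle2' : eVariationOn γ (Icc s₁ s₂) + eVariationOn γ (Icc s₂ 1)
        ≤ 0 + eVariationOn γ (Icc s₂ 1) := by rwa [zero_add]
    exact le_zero_iff.mp ((ENNReal.add_le_add_iff_right hfin3).mp hle2')
  have hconst : ∀ c ∈ Icc s₁ s₂, γ c = γ s₁ := by
    intro c hc
    have h := (eVariationOn.eq_zero_iff γ).mp hkey c hc s₁ ⟨le_rfl, h12⟩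
    exact edist_eq_zero.mp h
  have hsubc : ∀ s ∈ Icc (0:ℝ) 1, subPath γ s₁ s₂ s = γ s₁ := by
    intro s hs
    apply hconst
    constructor
    · nlinarith [hs.1, sub_nonneg.mpr h12]
    · nlinarith [hs.2, sub_nonneg.mpr h12, hs.1]
  refine ⟨fun _ => γ s₁, continuousOn_const, fun p _ => hγF s₁ hs₁,
    fun s hs => (hsubc s hs).symm, fun s _ => rfl,
    fun t _ => (hsubc 0 (left_mem_Icc.mpr zero_le_one)).symm,
    fun t _ => (hsubc 1 (right_mem_Icc.mpr zero_le_one)).symm⟩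
end
end

section
/- Let 𝒳 ⊆ ℝ² be open and convex, 𝒪 ⊆ 𝒳 closed, 𝒳_free := closure(𝒳) \ interior(𝒪), and let γ be a path in 𝒳_free such that convexHull(range γ) ∩ interior(𝒪) = ∅. Then for all 0 ≤ s₁ ≤ s₂ ≤ 1 with γ(s₁) = γ(s₂), the restricted path γ|[s₁,s₂] is path-homotopic within 𝒳_free to the constant path at γ(s₁). (Non-entanglement under the Obstacle-free Convex Hull definition implies non-entanglement under the 2D Tether Loop around Obstacle definition.) -/
open Set

noncomputable section

/-- Non-entanglement under the Obstacle-free Convex Hull definition implies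
non-entanglement under the 2D Tether Loop around Obstacle definition. -/
theorem stmt_9 (𝒳 𝒪 : Set (EuclideanSpace ℝ (Fin 2)))
    (hXopen : IsOpen 𝒳) (hXconv : Convex ℝ 𝒳) (hOclosed : IsClosed 𝒪) (hOX : 𝒪 ⊆ 𝒳)
    (γ : ℝ → EuclideanSpace ℝ (Fin 2))
    (hcont : ContinuousOn γ (Icc 0 1))
    (hmem : ∀ s ∈ Icc (0:ℝ) 1, γ s ∈ closure 𝒳 \ interior 𝒪)
    (hconv : convexHull ℝ (γ '' Icc 0 1) ∩ interior 𝒪 = ∅) :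
    ∀ s₁ s₂ : ℝ, 0 ≤ s₁ → s₁ ≤ s₂ → s₂ ≤ 1 → γ s₁ = γ s₂ →
      PathHomotopicIn (closure 𝒳 \ interior 𝒪) (subPath γ s₁ s₂) (fun _ => γ s₁) := by
  intro s₁ s₂ h0 h12 h21 heq
  -- the affine parameter map stays in [0,1]
  have hparam : ∀ s ∈ Icc (0:ℝ) 1, s₁ + s * (s₂ - s₁) ∈ Icc (0:ℝ) 1 := by
    intro s hs
    obtain ⟨hs0, hs1⟩ := hs
    constructor
    · nlinarith
    · nlinarith
  have hs₁ : (s₁ : ℝ) ∈ Icc (0:ℝ) 1 := ⟨h0, le_trans h12 h21⟩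
  refine ⟨fun p => (1 - p.2) • γ (s₁ + p.1 * (s₂ - s₁)) + p.2 • γ s₁, ?_, ?_, ?_, ?_, ?_, ?_⟩
  · -- continuity
    have hc1 : ContinuousOn (fun p : ℝ × ℝ => γ (s₁ + p.1 * (s₂ - s₁)))
        ((Icc (0:ℝ) 1) ×ˢ (Icc (0:ℝ) 1)) := by
      apply hcont.comp
      · exact (continuous_const.add ((continuous_fst).mul continuous_const)).continuousOn
      · intro p hp
        exact hparam p.1 hp.1
    exact ((continuousOn_const.sub continuous_snd.continuousOn).smul hc1).add
      (continuous_snd.continuousOn.smul continuousOn_const)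
  · -- membership
    intro p hp
    obtain ⟨hp1, hp2⟩ := hp
    have hx : γ (s₁ + p.1 * (s₂ - s₁)) ∈ convexHull ℝ (γ '' Icc 0 1) :=
      subset_convexHull ℝ _ ⟨_, hparam p.1 hp1, rfl⟩
    have hy : γ s₁ ∈ convexHull ℝ (γ '' Icc 0 1) :=
      subset_convexHull ℝ _ ⟨_, hs₁, rfl⟩
    have hmemhull : (1 - p.2) • γ (s₁ + p.1 * (s₂ - s₁)) + p.2 • γ s₁ ∈
        convexHull ℝ (γ '' Icc 0 1) :=
      (convex_convexHull ℝ _) hx hy (by linarith [hp2.2]) hp2.1 (by ring)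
    constructor
    · -- in closure 𝒳
      have hhull : convexHull ℝ (γ '' Icc 0 1) ⊆ closure 𝒳 := by
        apply convexHull_min
        · rintro _ ⟨s, hs, rfl⟩
          exact (hmem s hs).1
        · exact hXconv.closure
      exact hhull hmemhull
    · -- not in interior 𝒪
      intro hO
      rw [eq_empty_iff_forall_notMem] at hconv
      exact hconv _ ⟨hmemhull, hO⟩
  · intro s hs
    simp [subPath]
  · intro s hs
    simp
  · intro t ht
    simp only [subPath, zero_mul, add_zero]
    module
  · intro t ht
    simp only [subPath, one_mul]
    have : s₁ + (s₂ - s₁) = s₂ := by ring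
    rw [this, ← heq]
    module
end
end

section
/- Let 𝒳 ⊆ ℝⁿ be open and convex, 𝒪 ⊆ 𝒳 closed, 𝒳_free := closure(𝒳) \ interior(𝒪), and let γ be a path in 𝒳_free such that convexHull(range γ) ∩ interior(𝒪) = ∅. Then for all 0 ≤ s₁ ≤ s₂ ≤ 1, the restricted path γ|[s₁,s₂] is path-homotopic within 𝒳_free to the straight-line path l_{γ(s₁),γ(s₂)}. (Non-entanglement under the Obstacle-free Convex Hull definition implies non-entanglement under the Local Visibility Homotopy definition.) -/
open Set

noncomputable section

/-- Non-entanglement under the Obstacle-free Convex Hull definition implies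
non-entanglement under the Local Visibility Homotopy definition. -/
theorem stmt_10 {n : ℕ} (𝒳 𝒪 : Set (EuclideanSpace ℝ (Fin n)))
    (hXopen : IsOpen 𝒳) (hXconv : Convex ℝ 𝒳) (hOclosed : IsClosed 𝒪) (hOX : 𝒪 ⊆ 𝒳)
    (γ : ℝ → EuclideanSpace ℝ (Fin n))
    (hcont : ContinuousOn γ (Icc 0 1))
    (hmem : ∀ s ∈ Icc (0:ℝ) 1, γ s ∈ closure 𝒳 \ interior 𝒪)
    (hconv : convexHull ℝ (γ '' Icc 0 1) ∩ interior 𝒪 = ∅) :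
    ∀ s₁ s₂ : ℝ, 0 ≤ s₁ → s₁ ≤ s₂ → s₂ ≤ 1 →
      PathHomotopicIn (closure 𝒳 \ interior 𝒪) (subPath γ s₁ s₂)
        (linePath (γ s₁) (γ s₂)) := by
  intro s₁ s₂ hs₁ h12 hs₂
  have hsub : ∀ s ∈ Icc (0:ℝ) 1, s₁ + s * (s₂ - s₁) ∈ Icc (0:ℝ) 1 := by
    intro s hs
    constructor
    · nlinarith [hs.1, hs.2]
    · nlinarith [hs.1, hs.2]
  have hhull : convexHull ℝ (γ '' Icc 0 1) ⊆ closure 𝒳 \ interior 𝒪 := by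
    intro x hx
    refine ⟨?_, ?_⟩
    · exact convexHull_min (by rintro _ ⟨s, hs, rfl⟩; exact (hmem s hs).1) hXconv.closure hx
    · intro hxo
      have : x ∈ convexHull ℝ (γ '' Icc 0 1) ∩ interior 𝒪 := ⟨hx, hxo⟩
      simp [hconv] at this
  have hC : Convex ℝ (convexHull ℝ (γ '' Icc 0 1)) := convex_convexHull ℝ _
  have hmemhull : ∀ s ∈ Icc (0:ℝ) 1, γ s ∈ convexHull ℝ (γ '' Icc 0 1) :=
    fun s hs => subset_convexHull ℝ _ ⟨s, hs, rfl⟩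
  refine ⟨fun p => (1 - p.2) • γ (s₁ + p.1 * (s₂ - s₁)) +
      p.2 • ((1 - p.1) • γ s₁ + p.1 • γ s₂), ?_, ?_, ?_, ?_, ?_, ?_⟩
  · have hγc : ContinuousOn (fun p : ℝ × ℝ => γ (s₁ + p.1 * (s₂ - s₁)))
        ((Icc (0:ℝ) 1) ×ˢ (Icc (0:ℝ) 1)) := by
      apply hcont.comp (by fun_prop)
      intro p hp
      exact hsub p.1 hp.1
    exact ((continuousOn_const.sub continuousOn_snd).smul hγc).add
      (continuousOn_snd.smul (((continuousOn_const.sub continuousOn_fst).smul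
        continuousOn_const).add (continuousOn_fst.smul continuousOn_const)))
  · rintro ⟨s, t⟩ ⟨hs, ht⟩
    apply hhull
    have h1 : γ s₁ ∈ convexHull ℝ (γ '' Icc 0 1) := hmemhull s₁ ⟨hs₁, h12.trans hs₂⟩
    have h2 : γ s₂ ∈ convexHull ℝ (γ '' Icc 0 1) := hmemhull s₂ ⟨hs₁.trans h12, hs₂⟩
    have ha : γ (s₁ + s * (s₂ - s₁)) ∈ convexHull ℝ (γ '' Icc 0 1) :=
      hmemhull _ (hsub s hs)
    have hb : (1 - s) • γ s₁ + s • γ s₂ ∈ convexHull ℝ (γ '' Icc 0 1) :=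
      hC h1 h2 (by linarith [hs.2]) hs.1 (by ring)
    exact hC ha hb (by linarith [ht.2]) ht.1 (by ring)
  · intro s hs; simp [subPath]
  · intro s hs; simp [linePath]
  · intro t ht; simp [subPath]; module
  · intro t ht; simp [subPath]; module
end
end

section
/- Let 𝒳 ⊆ ℝⁿ be open and convex, 𝒪 ⊆ 𝒳 closed, 𝒳_free := closure(𝒳) \ interior(𝒪), and let γ be a closed path in 𝒳_free with γ(0) = γ(1) = x_a such that convexHull(range γ) ∩ interior(𝒪) = ∅. Then γ is path-homotopic within 𝒳_free to the constant path at x_a. (Non-entanglement of a closed tether under the Obstacle-free Convex Hull definition implies non-entanglement under the Closed Tether Homotopy to Constant Map definition.) -/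
open Set

noncomputable section

/-- Non-entanglement of a closed tether under the Obstacle-free Convex Hull definition
implies non-entanglement under the Closed Tether Homotopy to Constant Map definition. -/
theorem stmt_11 {n : ℕ} (𝒳 𝒪 : Set (EuclideanSpace ℝ (Fin n)))
    (hXopen : IsOpen 𝒳) (hXconv : Convex ℝ 𝒳) (hOclosed : IsClosed 𝒪) (hOX : 𝒪 ⊆ 𝒳)
    (γ : ℝ → EuclideanSpace ℝ (Fin n)) (xa : EuclideanSpace ℝ (Fin n))
    (hγ : IsPathIn (closure 𝒳 \ interior 𝒪) γ xa xa)
    (hconv : convexHull ℝ (γ '' Icc 0 1) ∩ interior 𝒪 = ∅) :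
    PathHomotopicIn (closure 𝒳 \ interior 𝒪) γ (fun _ => xa) := by

  obtain ⟨hcont, hmem, h0, h1⟩ := hγ
  refine ⟨fun p => (1 - p.2) • γ p.1 + p.2 • xa, ?_, ?_, ?_, ?_, ?_, ?_⟩
  · apply ContinuousOn.add
    · exact ContinuousOn.smul
        (by fun_prop : ContinuousOn (fun p : ℝ × ℝ => 1 - p.2) (Icc (0:ℝ) 1 ×ˢ Icc (0:ℝ) 1))
        (hcont.comp continuousOn_fst (fun p (hp : p ∈ Icc (0:ℝ) 1 ×ˢ Icc (0:ℝ) 1) => hp.1))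
    · fun_prop
  · rintro ⟨s, t⟩ ⟨hs, ht⟩
    have hhull : (1 - t) • γ s + t • xa ∈ convexHull ℝ (γ '' Icc 0 1) := by
      have hγs : γ s ∈ convexHull ℝ (γ '' Icc 0 1) :=
        subset_convexHull ℝ _ ⟨s, hs, rfl⟩
      have hxa : xa ∈ convexHull ℝ (γ '' Icc 0 1) :=
        h0 ▸ subset_convexHull ℝ _ ⟨0, ⟨le_refl 0, zero_le_one⟩, rfl⟩
      exact (convex_convexHull ℝ _) hγs hxa (by linarith [ht.2]) ht.1 (by ring)
    constructor
    · have hsub : convexHull ℝ (γ '' Icc 0 1) ⊆ closure 𝒳 := by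
        apply convexHull_min ?_ (hXconv.closure)
        rintro _ ⟨u, hu, rfl⟩
        exact (hmem u hu).1
      exact hsub hhull
    · intro hmem'
      exact absurd hconv (Set.Nonempty.ne_empty ⟨_, hhull, hmem'⟩)
  · intro s _; simp
  · intro s _; simp
  · intro t _; simp [h0]; module
  · intro t _; simp [h1]; module
end
end

section
/- Let 𝒳 ⊆ ℝ² be open and convex, 𝒪 ⊆ 𝒳 closed, 𝒳_free := closure(𝒳) \ interior(𝒪), and let γ be a path in 𝒳_free with γ(0) = x_a such that for all s, t ∈ [0,1] the point (1−t)·γ(s) + t·x_a does not lie in interior(𝒪). Then for all 0 ≤ s₁ ≤ s₂ ≤ 1 with γ(s₁) = γ(s₂), the restricted path γ|[s₁,s₂] is path-homotopic within 𝒳_free to the constant path at γ(s₁). (Non-entanglement under the Obstacle-free Linear Homotopy definition implies non-entanglement under the 2D Tether Loop around Obstacle definition.) -/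
open Set

noncomputable section

/-- Non-entanglement under the Obstacle-free Linear Homotopy definition implies
non-entanglement under the 2D Tether Loop around Obstacle definition. -/
theorem stmt_12 (𝒳 𝒪 : Set (EuclideanSpace ℝ (Fin 2)))
    (hXopen : IsOpen 𝒳) (hXconv : Convex ℝ 𝒳) (hOclosed : IsClosed 𝒪) (hOX : 𝒪 ⊆ 𝒳)
    (γ : ℝ → EuclideanSpace ℝ (Fin 2)) (xa : EuclideanSpace ℝ (Fin 2))
    (hcont : ContinuousOn γ (Icc 0 1))
    (hmem : ∀ s ∈ Icc (0:ℝ) 1, γ s ∈ closure 𝒳 \ interior 𝒪)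
    (h0 : γ 0 = xa)
    (hlin : ∀ s ∈ Icc (0:ℝ) 1, ∀ t ∈ Icc (0:ℝ) 1, (1 - t) • γ s + t • xa ∉ interior 𝒪) :
    ∀ s₁ s₂ : ℝ, 0 ≤ s₁ → s₁ ≤ s₂ → s₂ ≤ 1 → γ s₁ = γ s₂ →
      PathHomotopicIn (closure 𝒳 \ interior 𝒪) (subPath γ s₁ s₂) (fun _ => γ s₁) := by
  intro s₁ s₂ hs₁ hs₁₂ hs₂ hγeq
  classical
  set F : Set (EuclideanSpace ℝ (Fin 2)) := closure 𝒳 \ interior 𝒪 with hF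
  set ℓ : ℝ → ℝ := fun s => s₁ + s * (s₂ - s₁) with hℓdef
  have hℓmem : ∀ s ∈ Icc (0:ℝ) 1, ℓ s ∈ Icc (0:ℝ) 1 := by
    intro s hs
    simp only [hℓdef]
    constructor
    · nlinarith [mul_nonneg hs.1 (sub_nonneg.2 hs₁₂)]
    · nlinarith [mul_le_of_le_one_left (sub_nonneg.2 hs₁₂) hs.2]
  set Y : Set (EuclideanSpace ℝ (Fin 2)) :=
    (fun p : ℝ × ℝ => (1 - p.2) • γ (ℓ p.1) + p.2 • xa) '' (Icc 0 1 ×ˢ Icc 0 1) with hYdef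
  have hxaX : xa ∈ closure 𝒳 := by
    have := (hmem 0 (by norm_num)).1
    rwa [h0] at this
  have hYF : Y ⊆ F := by
    rintro y ⟨⟨u, v⟩, ⟨hu, hv⟩, rfl⟩
    constructor
    · exact hXconv.closure (hmem (ℓ u) (hℓmem u hu)).1 hxaX (by linarith [hv.2]) hv.1
        (by ring)
    · exact hlin (ℓ u) (hℓmem u hu) v hv
  have hxaY : xa ∈ Y := ⟨(0, 1), ⟨by norm_num, by norm_num⟩, by simp⟩
  have hLY : ∀ s ∈ Icc (0:ℝ) 1, γ (ℓ s) ∈ Y := by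
    intro s hs
    exact ⟨(s, 0), ⟨hs, by norm_num⟩, by simp⟩
  have hℓ0 : ℓ 0 = s₁ := by simp [hℓdef]
  have hℓ1 : ℓ 1 = s₂ := by simp [hℓdef]
  have hxY : γ s₁ ∈ Y := by
    have := hLY 0 (by norm_num)
    rwa [hℓ0] at this
  have hstar : StarConvex ℝ xa Y := by
    intro y hy a b ha hb hab
    obtain ⟨⟨u, v⟩, ⟨hu, hv⟩, rfl⟩ := hy
    have hv1 : (0:ℝ) ≤ v := hv.1
    have hv2 : v ≤ 1 := hv.2
    refine ⟨(u, b * v + a), ⟨hu, ⟨by simp only; nlinarith, by simp only; nlinarith⟩⟩, ?_⟩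
    have hb' : b = 1 - a := by linarith
    subst hb'
    simp only
    module
  haveI : ContractibleSpace Y := hstar.contractibleSpace ⟨xa, hxaY⟩
  haveI : SimplyConnectedSpace Y := inferInstance
  set x : Y := ⟨γ s₁, hxY⟩ with hxdef
  set L : Path x x :=
    { toFun := fun t => ⟨γ (ℓ t), hLY t t.2⟩
      continuous_toFun := by
        apply Continuous.subtype_mk
        exact hcont.comp_continuous
          (by fun_prop)
          (fun t => hℓmem t t.2)
      source' := by
        apply Subtype.ext
        simp [hℓ0, hxdef]
      target' := by
        apply Subtype.ext
        simp [hℓ1, ← hγeq, hxdef] } with hLdef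
  have htp : L.Homotopic (Path.refl x) := SimplyConnectedSpace.paths_homotopic L (Path.refl x)
  obtain ⟨G⟩ := htp
  set pj : ℝ → unitInterval := fun r => Set.projIcc 0 1 zero_le_one r with hpjdef
  have hpjmem : ∀ r ∈ Icc (0:ℝ) 1, (pj r : ℝ) = r := by
    intro r hr
    rw [hpjdef]
    simp only
    rw [Set.projIcc_of_mem _ hr]
  refine ⟨fun p => ↑(G (pj p.2, pj p.1)), ?_, ?_, ?_, ?_, ?_, ?_⟩
  · apply Continuous.continuousOn
    exact continuous_subtype_val.comp (G.continuous.comp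
      ((continuous_projIcc.comp continuous_snd).prodMk (continuous_projIcc.comp continuous_fst)))
  · intro p _
    exact hYF (G (pj p.2, pj p.1)).2
  · intro s hs
    have h0' : pj (0:ℝ) = 0 := by
      apply Subtype.ext
      simp [hpjdef]
    show (↑(G (pj (0:ℝ), pj s)) : EuclideanSpace ℝ (Fin 2)) = subPath γ s₁ s₂ s
    rw [h0', G.apply_zero]
    show (L (pj s) : EuclideanSpace ℝ (Fin 2)) = subPath γ s₁ s₂ s
    show γ (ℓ (pj s)) = γ (s₁ + s * (s₂ - s₁))
    rw [hpjmem s hs]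
  · intro s hs
    have h1' : pj (1:ℝ) = 1 := by
      apply Subtype.ext
      simp [hpjdef]
    show (↑(G (pj (1:ℝ), pj s)) : EuclideanSpace ℝ (Fin 2)) = γ s₁
    rw [h1', G.apply_one]
    rfl
  · intro t ht
    have h0' : pj (0:ℝ) = 0 := by
      apply Subtype.ext
      simp [hpjdef]
    show (↑(G (pj t, pj (0:ℝ))) : EuclideanSpace ℝ (Fin 2)) = subPath γ s₁ s₂ 0
    rw [h0']
    have := G.eq_fst (pj t) (show (0:unitInterval) ∈ ({0, 1} : Set unitInterval) by simp)
    rw [this]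
    show γ (ℓ ((0 : unitInterval) : ℝ)) = γ (s₁ + 0 * (s₂ - s₁))
    have h00 : ((0 : unitInterval) : ℝ) = 0 := rfl
    rw [h00, hℓ0]
    congr 1
    ring
  · intro t ht
    have h1' : pj (1:ℝ) = 1 := by
      apply Subtype.ext
      simp [hpjdef]
    show (↑(G (pj t, pj (1:ℝ))) : EuclideanSpace ℝ (Fin 2)) = subPath γ s₁ s₂ 1
    rw [h1']
    have := G.eq_fst (pj t) (show (1:unitInterval) ∈ ({0, 1} : Set unitInterval) by simp)
    rw [this]
    show γ (ℓ ((1 : unitInterval) : ℝ)) = γ (s₁ + 1 * (s₂ - s₁))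
    have h11 : ((1 : unitInterval) : ℝ) = 1 := rfl
    rw [h11, hℓ1]
    congr 1
    ring
end
end

section
/- Let 𝒳 ⊆ ℝⁿ be open and convex, 𝒪 ⊆ 𝒳 closed, 𝒳_free := closure(𝒳) \ interior(𝒪), and let γ be a path in 𝒳_free from x_a to x_r such that for all s, t ∈ [0,1] the point (1−t)·γ(s) + t·x_a does not lie in interior(𝒪). Then γ is path-homotopic within 𝒳_free to the straight-line path l_{x_a,x_r}. (This is the key step showing that non-entanglement under the Obstacle-free Linear Homotopy definition implies non-entanglement under the Path Class-Relaxed Local Visibility Homotopy definition.) -/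
open Set

noncomputable section

/-- Clamp a real number to `[0,1]`. -/
def cl01 (x : ℝ) : ℝ := max 0 (min 1 x)

lemma cl01_mem (x : ℝ) : cl01 x ∈ Icc (0:ℝ) 1 :=
  ⟨le_max_left _ _, max_le (by norm_num) (min_le_left _ _)⟩

lemma cl01_of_mem {x : ℝ} (h0 : 0 ≤ x) (h1 : x ≤ 1) : cl01 x = x := by
  simp [cl01, min_eq_right h1, max_eq_right h0]

lemma continuous_cl01 : Continuous cl01 :=
  continuous_const.max (continuous_const.min continuous_id)

/-- A tether configuration that is non-entangled under the Obstacle-free Linear Homotopy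
definition is path-homotopic within the free workspace to the straight-line path from the
anchor to the robot. -/
theorem stmt_14 {n : ℕ} (𝒳 𝒪 : Set (EuclideanSpace ℝ (Fin n)))
    (hXopen : IsOpen 𝒳) (hXconv : Convex ℝ 𝒳) (hOclosed : IsClosed 𝒪) (hOX : 𝒪 ⊆ 𝒳)
    (γ : ℝ → EuclideanSpace ℝ (Fin n)) (xa xr : EuclideanSpace ℝ (Fin n))
    (hγ : IsPathIn (closure 𝒳 \ interior 𝒪) γ xa xr)
    (hlin : ∀ s ∈ Icc (0:ℝ) 1, ∀ t ∈ Icc (0:ℝ) 1, (1 - t) • γ s + t • xa ∉ interior 𝒪) :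
    PathHomotopicIn (closure 𝒳 \ interior 𝒪) γ (linePath xa xr) := by
  obtain ⟨hcont, hmem, h0, h1⟩ := hγ
  have hconv : Convex ℝ (closure 𝒳) := hXconv.closure
  have hxa : xa ∈ closure 𝒳 := by rw [← h0]; exact (hmem 0 ⟨le_refl 0, zero_le_one⟩).1
  have hxr : xr ∈ closure 𝒳 := by rw [← h1]; exact (hmem 1 ⟨zero_le_one, le_refl 1⟩).1
  set γc : ℝ → EuclideanSpace ℝ (Fin n) := fun x => γ (cl01 x) with hγcdef
  have hγc_cont : Continuous γc := by
    have : ContinuousOn (fun x => γ (cl01 x)) univ :=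
      hcont.comp continuous_cl01.continuousOn (fun x _ => cl01_mem x)
    exact continuousOn_univ.mp this
  have hγc_mem : ∀ x, γc x ∈ closure 𝒳 \ interior 𝒪 := fun x => hmem _ (cl01_mem x)
  set b1 : ℝ → ℝ := fun s => min 1 (max 0 (3*s - 1)) with hb1
  set b2 : ℝ → ℝ := fun s => min (3*s) (min 1 (3 - 3*s)) with hb2
  set A : ℝ × ℝ → EuclideanSpace ℝ (Fin n) := fun p =>
    (1 - cl01 (2*p.2 * b2 p.1)) • γc ((1 - 2*p.2)*p.1 + 2*p.2 * b1 p.1)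
      + cl01 (2*p.2 * b2 p.1) • xa with hA
  set B : ℝ × ℝ → EuclideanSpace ℝ (Fin n) := fun p =>
    linePath xa xr (cl01 ((2 - 2*p.2) * max 0 (3*p.1 - 2) + (2*p.2 - 1)*p.1)) with hB
  have hAB : ∀ s : ℝ, A (s, (1/2 : ℝ)) = B (s, (1/2 : ℝ)) := by
    intro s
    have e1 : (1 - 2*(1/2:ℝ))*s + 2*(1/2:ℝ) * b1 s = b1 s := by ring
    have e2 : 2*(1/2:ℝ) * b2 s = b2 s := by ring
    have e3 : (2 - 2*(1/2:ℝ)) * max 0 (3*s - 2) + (2*(1/2:ℝ) - 1)*s = max 0 (3*s-2) := by ring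
    simp only [hA, hB, e1, e2, e3]
    rcases le_or_gt s (1/3) with hs | hs
    · have hb1s : b1 s = 0 := by
        rw [hb1]; simp only []
        rw [max_eq_left (by linarith), min_eq_right zero_le_one]
      have hmax : max 0 (3*s - 2) = 0 := max_eq_left (by linarith)
      have hcl0 : cl01 0 = 0 := cl01_of_mem le_rfl zero_le_one
      rw [hb1s, hmax, hcl0]
      have : γc 0 = xa := by rw [hγcdef]; simp only []; rw [hcl0, h0]
      rw [this, linePath]
      rw [← add_smul]
      simp
    · rcases le_or_gt s (2/3) with hs2 | hs2
      · have hb2s : b2 s = 1 := by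
          rw [hb2]; simp only []
          rw [min_eq_left (by linarith : (1:ℝ) ≤ 3 - 3*s), min_eq_right (by linarith)]
        have hmax : max 0 (3*s - 2) = 0 := max_eq_left (by linarith)
        have hcl0 : cl01 0 = 0 := cl01_of_mem le_rfl zero_le_one
        have hcl1 : cl01 1 = 1 := cl01_of_mem zero_le_one le_rfl
        rw [hb2s, hmax, hcl0, hcl1, linePath]
        simp
      · have hb1s : b1 s = 1 := by
          rw [hb1]; simp only []
          rw [max_eq_right (by linarith), min_eq_left (by linarith)]
        have hb2s : b2 s = 3 - 3*s := by
          rw [hb2]; simp only []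
          rw [min_eq_right (by linarith : 3 - 3*s ≤ (1:ℝ)), min_eq_right (by linarith)]
        have hγc1 : γc (b1 s) = xr := by
          rw [hγcdef]; simp only []
          rw [hb1s, cl01_of_mem zero_le_one le_rfl, h1]
        rw [hγc1, hb2s]
        rcases le_or_gt s 1 with hs3 | hs3
        · have hc1 : cl01 (3 - 3*s) = 3 - 3*s := cl01_of_mem (by linarith) (by linarith)
          have hmax : max 0 (3*s - 2) = 3*s - 2 := max_eq_right (by linarith)
          have hc2 : cl01 (3*s - 2) = 3*s - 2 := cl01_of_mem (by linarith) (by linarith)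
          rw [hc1, hmax, hc2, linePath]
          module
        · have hc1 : cl01 (3 - 3*s) = 0 := by
            rw [cl01, min_eq_right (by linarith), max_eq_left (by linarith)]
          have hmax : max 0 (3*s - 2) = 3*s - 2 := max_eq_right (by linarith)
          have hc2 : cl01 (3*s - 2) = 1 := by
            rw [cl01, min_eq_left (by linarith)]
            exact max_eq_right zero_le_one
          rw [hc1, hmax, hc2, linePath]
          module
  refine ⟨fun p => if p.2 ≤ 1/2 then A p else B p, ?_, ?_, ?_, ?_, ?_, ?_⟩
  · -- continuity
    have hA_cont : Continuous A := by
      rw [hA]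
      apply Continuous.add
      · apply Continuous.fun_smul
        · exact continuous_const.sub (continuous_cl01.comp (by fun_prop))
        · exact hγc_cont.comp (by fun_prop)
      · exact (continuous_cl01.comp (by fun_prop)).smul continuous_const
    have hB_cont : Continuous B := by
      rw [hB]
      unfold linePath
      apply Continuous.add
      · exact (continuous_const.sub (continuous_cl01.comp (by fun_prop))).smul continuous_const
      · exact (continuous_cl01.comp (by fun_prop)).smul continuous_const
    exact (Continuous.if_le hA_cont hB_cont continuous_snd continuous_const
      (fun p hp => by
        have : p = (p.1, (1/2:ℝ)) := by rw [← hp]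
        rw [this]; exact hAB p.1)).continuousOn
  · -- membership
    rintro ⟨s, t⟩ ⟨hs, ht⟩
    dsimp only
    split_ifs with h
    · have hbmem := cl01_mem (2*t * b2 s)
      constructor
      · exact hconv (hγc_mem _).1 hxa (by linarith [hbmem.2]) hbmem.1 (by ring)
      · exact hlin (cl01 ((1 - 2*t)*s + 2*t * b1 s)) (cl01_mem _) _ hbmem
    · have hcmem := cl01_mem ((2 - 2*t) * max 0 (3*s - 2) + (2*t - 1)*s)
      set c := cl01 ((2 - 2*t) * max 0 (3*s - 2) + (2*t - 1)*s) with hc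
      have key := hlin 1 ⟨zero_le_one, le_refl 1⟩ (1 - c)
        ⟨by linarith [hcmem.2], by linarith [hcmem.1]⟩
      constructor
      · show (1 - c) • xa + c • xr ∈ closure 𝒳
        exact hconv hxa hxr (by linarith [hcmem.2]) hcmem.1 (by ring)
      · have heq : (1 - (1 - c)) • γ 1 + (1 - c) • xa = linePath xa xr c := by
          rw [h1, linePath]; module
        show linePath xa xr c ∉ interior 𝒪
        rwa [heq] at key
  · -- H (s, 0) = γ s
    intro s hs
    simp only
    rw [if_pos (by norm_num : (0:ℝ) ≤ 1/2), hA]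
    simp only []
    have e1 : 2*(0:ℝ) * b2 s = 0 := by ring
    have e2 : (1 - 2*(0:ℝ))*s + 2*(0:ℝ) * b1 s = s := by ring
    rw [e1, e2, cl01_of_mem le_rfl zero_le_one, hγcdef]
    simp only []
    rw [cl01_of_mem hs.1 hs.2]
    simp
  · -- H (s, 1) = linePath xa xr s
    intro s hs
    simp only
    rw [if_neg (by norm_num : ¬ (1:ℝ) ≤ 1/2), hB]
    simp only []
    have e : (2 - 2*(1:ℝ)) * max 0 (3*s - 2) + (2*(1:ℝ) - 1)*s = s := by ring
    rw [e, cl01_of_mem hs.1 hs.2]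
  · -- H (0, t) = γ 0
    intro t ht
    simp only
    split_ifs with h
    · rw [hA]; simp only []
      have hb10 : b1 0 = 0 := by
        rw [hb1]; simp only []
        rw [max_eq_left (by norm_num), min_eq_right zero_le_one]
      have hb20 : b2 0 = 0 := by
        rw [hb2]; norm_num
      rw [hb10, hb20]
      have e1 : 2*t * (0:ℝ) = 0 := by ring
      have e2 : (1 - 2*t)*(0:ℝ) + 2*t * (0:ℝ) = 0 := by ring
      rw [e2, e1, cl01_of_mem le_rfl zero_le_one, hγcdef]
      simp only []
      rw [cl01_of_mem le_rfl zero_le_one]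
      simp
    · rw [hB]; simp only []
      have hmax : max 0 (3*(0:ℝ) - 2) = 0 := max_eq_left (by norm_num)
      rw [hmax]
      have e : (2 - 2*t) * (0:ℝ) + (2*t - 1)*(0:ℝ) = 0 := by ring
      rw [e, cl01_of_mem le_rfl zero_le_one, linePath, h0]
      simp
  · -- H (1, t) = γ 1
    intro t ht
    simp only
    split_ifs with h
    · rw [hA]; simp only []
      have hb11 : b1 1 = 1 := by
        rw [hb1]; simp only []
        rw [max_eq_right (by norm_num), min_eq_left (by norm_num)]
      have hb21 : b2 1 = 0 := by
        rw [hb2]; norm_num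
      rw [hb11, hb21]
      have e1 : 2*t * (0:ℝ) = 0 := by ring
      have e2 : (1 - 2*t)*(1:ℝ) + 2*t * (1:ℝ) = 1 := by ring
      rw [e1, e2, cl01_of_mem le_rfl zero_le_one, hγcdef]
      simp only []
      rw [cl01_of_mem zero_le_one le_rfl]
      simp
    · rw [hB]; simp only []
      have hmax : max 0 (3*(1:ℝ) - 2) = 1 := by norm_num
      rw [hmax]
      have e : (2 - 2*t) * (1:ℝ) + (2*t - 1)*(1:ℝ) = 1 := by ring
      rw [e, cl01_of_mem zero_le_one le_rfl, linePath, h1]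
      simp
end
end
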